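/- arXiv:1210.6259 — 5 statements merged into one kernel-verified Lean document; each statement's English description precedes it below -/
import Mathlib

section
/- Let ε ∈ (0,1) be such that the set B = {x ∈ S : λ(x) < 1−ε} satisfies μ(B) > 0, and let Y₁ be the indicator of the event that vertex 1 is isolated in G(n,K) and X₁ ∈ B. Then E[Y₁] ≥ ∫_B (1 − λ(x)pₙ)^{n−1} dμ(x) ≥ (1 − (1−ε)pₙ)^{n−1} μ(B), and consequently n·E[Y₁] → ∞ as n → ∞. -/
open MeasureTheory Filter Set
open scoped ENNReal

noncomputable section

/-- The edge probability scaling `pₙ = log n / n`. -/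
def pEdge (n : ℕ) : ℝ := Real.log n / n

/-- `λ(x) = ∫ K(x,y) dμ(y)`. -/
def lamFun {S : Type*} [MeasurableSpace S] (K : S → S → ℝ) (μ : Measure S) (x : S) : ℝ :=
  ∫ y, K x y ∂μ

/-- `λ₂(x) = (∫ K(x,y)² dμ(y))^{1/2}`. -/
def lam2Fun {S : Type*} [MeasurableSpace S] (K : S → S → ℝ) (μ : Measure S) (x : S) : ℝ :=
  Real.sqrt (∫ y, (K x y) ^ 2 ∂μ)

/-- The isolation parameter `Λ = essinf λ`. -/
def isolParam {S : Type*} [MeasurableSpace S] (K : S → S → ℝ) (μ : Measure S) : ℝ :=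
  essInf (lamFun K μ) μ

/-- `‖λ₂‖_∞`, the `μ`-essential supremum of `λ₂`. -/
def lam2Norm {S : Type*} [MeasurableSpace S] (K : S → S → ℝ) (μ : Measure S) : ℝ :=
  essSup (lam2Fun K μ) μ

/-- A kernel is irreducible if there is no measurable `A` with `0 < μ A < 1` and
`K = 0` `(μ ⊗ μ)`-a.e. on `A × Aᶜ`. -/
def IrreducibleKernel {S : Type*} [MeasurableSpace S] (K : S → S → ℝ) (μ : Measure S) : Prop :=
  ¬ ∃ A : Set S, MeasurableSet A ∧ 0 < μ A ∧ μ A < 1 ∧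
      ∀ᵐ p ∂(μ.prod μ), p.1 ∈ A → p.2 ∈ Aᶜ → K p.1 p.2 = 0

/-- The inhomogeneous random graph `G(n,K)` as a deterministic function of the points `x` and
of auxiliary i.i.d. uniforms `u`: the pair `{i,j}` (`i ≠ j`) is an edge iff
`u (min i j) (max i j) < min 1 (K (x i) (x j) * pₙ)`. -/
def graphOf {S : Type*} (K : S → S → ℝ) (n : ℕ) (x : Fin n → S) (u : Fin n → Fin n → ℝ) :
    SimpleGraph (Fin n) where
  Adj i j := i ≠ j ∧ u (min i j) (max i j) < min 1 (K (x (min i j)) (x (max i j)) * pEdge n)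
  symm := by
    constructor
    rintro i j ⟨hne, hlt⟩
    exact ⟨hne.symm, by rwa [min_comm j i, max_comm j i]⟩
  loopless := ⟨fun i h => h.1 rfl⟩

/-- The law of the randomness underlying `G(n,K)`: `n` i.i.d. points with law `μ` together with
an independent array of i.i.d. uniforms on `[0,1]`. -/
def graphMeasure {S : Type*} [MeasurableSpace S] (μ : Measure S) (n : ℕ) :
    Measure ((Fin n → S) × (Fin n → Fin n → ℝ)) :=
  (Measure.pi fun _ : Fin n => μ).prod
    (Measure.pi fun _ : Fin n => Measure.pi fun _ : Fin n => volume.restrict (Icc (0:ℝ) 1))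

lemma unif_prob : IsProbabilityMeasure (volume.restrict (Icc (0:ℝ) 1)) := by
  constructor
  rw [Measure.restrict_apply_univ, Real.volume_Icc, sub_zero, ENNReal.ofReal_one]

lemma unif_Ici {c : ℝ} (hc0 : 0 ≤ c) :
    (volume.restrict (Icc (0:ℝ) 1)) (Ici c) = ENNReal.ofReal (1 - c) := by
  rw [Measure.restrict_apply measurableSet_Ici]
  have h : Ici c ∩ Icc (0:ℝ) 1 = Icc c 1 := by
    ext t
    simp only [mem_inter_iff, mem_Ici, mem_Icc]
    exact ⟨fun ⟨h1, _, h3⟩ => ⟨h1, h3⟩, fun ⟨h1, h2⟩ => ⟨h1, hc0.trans h1, h2⟩⟩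
  rw [h, Real.volume_Icc]

lemma uMeasure (m : ℕ) [NeZero m] (c : Fin m → ℝ) (hc : ∀ j, 0 ≤ c j) :
    (Measure.pi fun _ : Fin m => Measure.pi fun _ : Fin m => volume.restrict (Icc (0:ℝ) 1))
      {u | ∀ j, j ≠ 0 → c j ≤ u 0 j}
      = ∏ j, (if j = 0 then 1 else ENNReal.ofReal (1 - c j)) := by
  haveI := unif_prob
  have hset : {u : Fin m → Fin m → ℝ | ∀ j, j ≠ 0 → c j ≤ u 0 j} =
      univ.pi (fun i => if i = 0 then
        (univ.pi fun j => if j = 0 then univ else Ici (c j)) else univ) := by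
    ext u
    simp only [mem_setOf_eq, mem_univ_pi]
    constructor
    · intro h i
      split_ifs with hi
      · subst hi
        rw [mem_univ_pi]
        intro j
        split_ifs with hj
        · trivial
        · exact h j hj
      · trivial
    · intro h j hj
      have h0 := h 0
      rw [if_pos rfl, mem_univ_pi] at h0
      have := h0 j
      rwa [if_neg hj] at this
  rw [hset, Measure.pi_pi]
  have hD : ∀ i : Fin m, (Measure.pi fun _ : Fin m => volume.restrict (Icc (0:ℝ) 1))
      (if i = 0 then (univ.pi fun j => if j = 0 then univ else Ici (c j)) else univ) =
      (if i = 0 then ∏ j, (if j = 0 then 1 else ENNReal.ofReal (1 - c j)) else 1) := by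
    intro i
    split_ifs with hi
    · rw [Measure.pi_pi]
      refine Finset.prod_congr rfl fun j _ => ?_
      split_ifs with hj
      · exact measure_univ
      · exact unif_Ici (hc j)
    · exact measure_univ
  rw [Finset.prod_congr rfl fun i _ => hD i, Finset.prod_ite_eq' Finset.univ (0 : Fin m)
    (fun _ => ∏ j, (if j = 0 then 1 else ENNReal.ofReal (1 - c j)))]
  simp

lemma lintegral_pi_pow {α : Type*} [MeasurableSpace α] (μ : Measure α) [SigmaFinite μ]
    {n : ℕ} (f : α → ℝ≥0∞) (hf : Measurable f) :
    ∫⁻ x : Fin n → α, ∏ i, f (x i) ∂(Measure.pi fun _ => μ) = (∫⁻ x, f x ∂μ) ^ n := by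
  induction n with
  | zero => simp [Measure.pi_univ]
  | succ n ih =>
    have h := measurePreserving_piFinSuccAbove (fun _ : Fin (n + 1) => μ) 0
    have hg : Measurable fun q : α × (Fin n → α) => f q.1 * ∏ j, f (q.2 j) :=
      (hf.comp measurable_fst).mul
        (Finset.measurable_prod _ fun j _ => hf.comp ((measurable_pi_apply j).comp measurable_snd))
    have key := h.lintegral_comp hg
    simp only [MeasurableEquiv.piFinSuccAbove_apply, Fin.zero_succAbove] at key
    calc ∫⁻ x : Fin (n+1) → α, ∏ i, f (x i) ∂(Measure.pi fun _ => μ)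
        = ∫⁻ x : Fin (n+1) → α, f (x 0) * ∏ j : Fin n, f (x j.succ)
            ∂(Measure.pi fun _ => μ) := by
          simp_rw [Fin.prod_univ_succ]
      _ = ∫⁻ q : α × (Fin n → α), f q.1 * ∏ j, f (q.2 j)
            ∂(μ.prod (Measure.pi fun _ => μ)) := key
      _ = (∫⁻ x, f x ∂μ) * ∫⁻ x : Fin n → α, ∏ i, f (x i) ∂(Measure.pi fun _ => μ) :=
          lintegral_prod_mul hf.aemeasurable
            (Finset.measurable_prod _ fun j _ => hf.comp (measurable_pi_apply j)).aemeasurable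
      _ = (∫⁻ x, f x ∂μ) ^ (n + 1) := by rw [ih, pow_succ']

lemma pEdge_nonneg {n : ℕ} (hn : 1 ≤ n) : 0 ≤ pEdge n :=
  div_nonneg (Real.log_nonneg (by exact_mod_cast hn)) (Nat.cast_nonneg n)

lemma key_identity {S : Type*} [MeasurableSpace S] (μ : Measure S) [IsProbabilityMeasure μ]
    (K : S → S → ℝ) (hKnonneg : ∀ x y, 0 ≤ K x y) (hKmeas : Measurable (Function.uncurry K))
    (B : Set S) (hBmeas : MeasurableSet B) (n : ℕ) :
    graphMeasure μ (n+2) {ω | (∀ j, ¬ (graphOf K (n+2) ω.1 ω.2).Adj 0 j) ∧ ω.1 0 ∈ B} =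
      ∫⁻ a in B, (∫⁻ y, ENNReal.ofReal (1 - min 1 (K a y * pEdge (n+2))) ∂μ) ^ (n+1) ∂μ := by
  classical
  haveI := unif_prob
  have hp0 : 0 ≤ pEdge (n+2) := pEdge_nonneg (by omega)
  -- measurability of the event
  have hAdjMeas : ∀ j : Fin (n+2), MeasurableSet {ω : (Fin (n+2) → S) × (Fin (n+2) → Fin (n+2) → ℝ) |
      (graphOf K (n+2) ω.1 ω.2).Adj 0 j} := by
    intro j
    have hrw : {ω : (Fin (n+2) → S) × (Fin (n+2) → Fin (n+2) → ℝ) |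
        (graphOf K (n+2) ω.1 ω.2).Adj 0 j} =
        {ω : (Fin (n+2) → S) × (Fin (n+2) → Fin (n+2) → ℝ) | (0:Fin (n+2)) ≠ j} ∩
        {ω | ω.2 (min 0 j) (max 0 j) <
            min 1 (K (ω.1 (min 0 j)) (ω.1 (max 0 j)) * pEdge (n+2))} := rfl
    rw [hrw]
    refine (MeasurableSet.const _).inter (measurableSet_lt ?_ ?_)
    · exact (measurable_pi_apply _).comp ((measurable_pi_apply _).comp measurable_snd)
    · exact measurable_const.min ((hKmeas.comp (f := fun ω : (Fin (n+2) → S) × (Fin (n+2) → Fin (n+2) → ℝ) =>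
          (ω.1 (min 0 j), ω.1 (max 0 j)))
        (((measurable_pi_apply _).comp measurable_fst).prodMk
          ((measurable_pi_apply _).comp measurable_fst))).mul_const _)
  have hEmeas : MeasurableSet {ω : (Fin (n+2) → S) × (Fin (n+2) → Fin (n+2) → ℝ) |
      (∀ j, ¬ (graphOf K (n+2) ω.1 ω.2).Adj 0 j) ∧ ω.1 0 ∈ B} := by
    have hrw : {ω : (Fin (n+2) → S) × (Fin (n+2) → Fin (n+2) → ℝ) |
        (∀ j, ¬ (graphOf K (n+2) ω.1 ω.2).Adj 0 j) ∧ ω.1 0 ∈ B} =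
        (⋂ j, {ω : (Fin (n+2) → S) × (Fin (n+2) → Fin (n+2) → ℝ) |
          (graphOf K (n+2) ω.1 ω.2).Adj 0 j}ᶜ) ∩ ((fun ω : (Fin (n+2) → S) × (Fin (n+2) → Fin (n+2) → ℝ) => ω.1 0) ⁻¹' B) := by
      ext ω
      simp only [mem_inter_iff, mem_iInter, mem_compl_iff, mem_setOf_eq, mem_preimage]
    rw [hrw]
    exact (MeasurableSet.iInter fun j => (hAdjMeas j).compl).inter
      (((measurable_pi_apply 0).comp measurable_fst) hBmeas)
  rw [graphMeasure, Measure.prod_apply hEmeas]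
  -- inner u-measure
  have hAdjIff : ∀ (x : Fin (n+2) → S) (u : Fin (n+2) → Fin (n+2) → ℝ) (j : Fin (n+2)),
      (graphOf K (n+2) x u).Adj 0 j ↔
        ((0:Fin (n+2)) ≠ j ∧ u 0 j < min 1 (K (x 0) (x j) * pEdge (n+2))) := by
    intro x u j
    show ((0:Fin (n+2)) ≠ j ∧ u (min 0 j) (max 0 j) <
        min 1 (K (x (min 0 j)) (x (max 0 j)) * pEdge (n+2))) ↔ _
    rw [min_eq_left (Fin.zero_le j), max_eq_right (Fin.zero_le j)]
  have hinner : ∀ x : Fin (n+2) → S,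
      (Measure.pi fun _ : Fin (n+2) => Measure.pi fun _ : Fin (n+2) =>
          volume.restrict (Icc (0:ℝ) 1))
        (Prod.mk x ⁻¹' {ω : (Fin (n+2) → S) × (Fin (n+2) → Fin (n+2) → ℝ) |
          (∀ j, ¬ (graphOf K (n+2) ω.1 ω.2).Adj 0 j) ∧ ω.1 0 ∈ B}) =
      if x 0 ∈ B then
        ∏ j : Fin (n+2), (if j = 0 then 1
          else ENNReal.ofReal (1 - min 1 (K (x 0) (x j) * pEdge (n+2)))) else 0 := by
    intro x
    by_cases hx : x 0 ∈ B
    · rw [if_pos hx]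
      have hpre : Prod.mk x ⁻¹' {ω : (Fin (n+2) → S) × (Fin (n+2) → Fin (n+2) → ℝ) |
          (∀ j, ¬ (graphOf K (n+2) ω.1 ω.2).Adj 0 j) ∧ ω.1 0 ∈ B} =
          {u : Fin (n+2) → Fin (n+2) → ℝ | ∀ j, j ≠ 0 →
            min 1 (K (x 0) (x j) * pEdge (n+2)) ≤ u 0 j} := by
        ext u
        simp only [mem_preimage, mem_setOf_eq, hx, and_true]
        constructor
        · intro h j hj
          have hj' := h j
          rw [hAdjIff] at hj'
          push_neg at hj'
          exact hj' (Ne.symm hj)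
        · intro h j
          rw [hAdjIff]
          push_neg
          intro hj
          exact h j (Ne.symm hj)
      rw [hpre, uMeasure (n+2) _ (fun j => le_min zero_le_one
        (mul_nonneg (hKnonneg _ _) hp0))]
    · rw [if_neg hx]
      have hpre : Prod.mk x ⁻¹' {ω : (Fin (n+2) → S) × (Fin (n+2) → Fin (n+2) → ℝ) |
          (∀ j, ¬ (graphOf K (n+2) ω.1 ω.2).Adj 0 j) ∧ ω.1 0 ∈ B} = ∅ := by
        ext u
        simp only [mem_preimage, mem_setOf_eq, hx, and_false, mem_empty_iff_false]
      rw [hpre, measure_empty]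
  rw [lintegral_congr hinner]
  -- change of variables and Fubini
  set G : S × (Fin (n+1) → S) → ℝ≥0∞ := fun q =>
    if q.1 ∈ B then ∏ j : Fin (n+1),
      ENNReal.ofReal (1 - min 1 (K q.1 (q.2 j) * pEdge (n+2))) else 0 with hGdef
  have hbase : Measurable fun q : S × (Fin (n+1) → S) =>
      ∏ j : Fin (n+1), ENNReal.ofReal (1 - min 1 (K q.1 (q.2 j) * pEdge (n+2))) :=
    Finset.measurable_prod _ fun j _ => ENNReal.measurable_ofReal.comp
      (measurable_const.sub (measurable_const.min ((hKmeas.comp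
        (measurable_fst.prodMk ((measurable_pi_apply j).comp measurable_snd))).mul_const _)))
  have hGmeas : Measurable G := by
    have : G = (Prod.fst ⁻¹' B).indicator (fun q : S × (Fin (n+1) → S) =>
        ∏ j : Fin (n+1), ENNReal.ofReal (1 - min 1 (K q.1 (q.2 j) * pEdge (n+2)))) := by
      ext q
      rw [indicator_apply]
      rfl
    rw [this]
    exact hbase.indicator (measurable_fst hBmeas)
  have h := measurePreserving_piFinSuccAbove (fun _ : Fin (n+2) => μ) 0
  have hcv : (∫⁻ x : Fin (n+2) → S, (if x 0 ∈ B then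
        ∏ j : Fin (n+2), (if j = 0 then 1
          else ENNReal.ofReal (1 - min 1 (K (x 0) (x j) * pEdge (n+2)))) else 0)
        ∂(Measure.pi fun _ => μ)) =
      ∫⁻ q, G q ∂(μ.prod (Measure.pi fun _ : Fin (n+1) => μ)) := by
    rw [← h.lintegral_comp hGmeas]
    refine lintegral_congr fun x => ?_
    have he : (MeasurableEquiv.piFinSuccAbove (fun _ : Fin (n+2) => S) 0) x =
        (x 0, fun j : Fin (n+1) => x j.succ) := by
      rfl
    rw [he, hGdef]
    by_cases hx : x 0 ∈ B
    · simp only [if_pos hx]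
      have hfac : ∀ j : Fin (n+1), (if (j.succ : Fin (n+2)) = 0 then (1:ℝ≥0∞)
          else ENNReal.ofReal (1 - min 1 (K (x 0) (x j.succ) * pEdge (n+2)))) =
          ENNReal.ofReal (1 - min 1 (K (x 0) (x j.succ) * pEdge (n+2))) :=
        fun j => if_neg (Fin.succ_ne_zero j)
      rw [Fin.prod_univ_succ, if_pos rfl, one_mul]
      exact Finset.prod_congr rfl fun j _ => hfac j
    · simp only [if_neg hx]
  rw [hcv, lintegral_prod G hGmeas.aemeasurable]
  have hin : ∀ a : S, (∫⁻ b, G (a, b) ∂(Measure.pi fun _ : Fin (n+1) => μ)) =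
      if a ∈ B then (∫⁻ y, ENNReal.ofReal (1 - min 1 (K a y * pEdge (n+2))) ∂μ) ^ (n+1)
      else 0 := by
    intro a
    by_cases ha : a ∈ B
    · simp only [hGdef, if_pos ha]
      exact lintegral_pi_pow μ (fun y => ENNReal.ofReal (1 - min 1 (K a y * pEdge (n+2))))
        (ENNReal.measurable_ofReal.comp (measurable_const.sub
          (measurable_const.min (hKmeas.of_uncurry_left.mul_const _))))
    · simp only [hGdef, if_neg ha, lintegral_zero]
  rw [lintegral_congr hin]
  have hind : (fun a => if a ∈ B then
      (∫⁻ y, ENNReal.ofReal (1 - min 1 (K a y * pEdge (n+2))) ∂μ) ^ (n+1) else 0) =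
      B.indicator (fun a =>
        (∫⁻ y, ENNReal.ofReal (1 - min 1 (K a y * pEdge (n+2))) ∂μ) ^ (n+1)) := by
    ext a
    rw [indicator_apply]
  rw [hind, lintegral_indicator hBmeas]

lemma pEdge_lt_one {n : ℕ} (hn : 1 ≤ n) : pEdge n < 1 := by
  have hn0 : (0:ℝ) < n := by exact_mod_cast Nat.lt_of_lt_of_le Nat.zero_lt_one hn
  rw [pEdge, div_lt_one hn0]
  have := Real.log_le_sub_one_of_pos hn0
  linarith

lemma ofReal_max_zero (t : ℝ) : ENNReal.ofReal (max t 0) = ENNReal.ofReal t := by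
  rcases le_total t 0 with h | h
  · rw [max_eq_right h, ENNReal.ofReal_zero, ENNReal.ofReal_of_nonpos h]
  · rw [max_eq_left h]

/-- **First moment lower bound** (equation (2.1)).  With `B = {x : λ(x) < 1-ε}` of positive
measure and `Y₁` the indicator that vertex `1` is isolated and `X₁ ∈ B`, one has
`E[Y₁] ≥ ∫_B (1-λ(x)pₙ)^{n-1} dμ(x) ≥ (1-(1-ε)pₙ)^{n-1} μ(B)`, and `n E[Y₁] → ∞`.
(The graph has `n+2 ≥ 2` vertices and vertex `0` plays the role of vertex `1`.) -/
theorem first_moment_isolated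
    {S : Type*} [MetricSpace S] [TopologicalSpace.SeparableSpace S]
    [MeasurableSpace S] [BorelSpace S]
    (μ : Measure S) [IsProbabilityMeasure μ] (K : S → S → ℝ)
    (hKsymm : ∀ x y, K x y = K y x)
    (hKnonneg : ∀ x y, 0 ≤ K x y)
    (hKmeas : Measurable (Function.uncurry K))
    (hKint : Integrable (Function.uncurry K) (μ.prod μ))
    (ε : ℝ) (hε0 : 0 < ε) (hε1 : ε < 1)
    (hB : 0 < μ {x | lamFun K μ x < 1 - ε}) :
    (∀ n : ℕ,
      (1 - (1 - ε) * pEdge (n+2)) ^ (n+1) * (μ {x | lamFun K μ x < 1 - ε}).toReal ≤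
        ∫ x in {x | lamFun K μ x < 1 - ε}, (1 - lamFun K μ x * pEdge (n+2)) ^ (n+1) ∂μ ∧
      ∫ x in {x | lamFun K μ x < 1 - ε}, (1 - lamFun K μ x * pEdge (n+2)) ^ (n+1) ∂μ ≤
        (graphMeasure μ (n+2) {ω |
          (∀ j, ¬ (graphOf K (n+2) ω.1 ω.2).Adj 0 j) ∧
            ω.1 0 ∈ {x | lamFun K μ x < 1 - ε}}).toReal) ∧
    Tendsto (fun n : ℕ => ((n:ℝ) + 2) *
        (graphMeasure μ (n+2) {ω |
          (∀ j, ¬ (graphOf K (n+2) ω.1 ω.2).Adj 0 j) ∧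
            ω.1 0 ∈ {x | lamFun K μ x < 1 - ε}}).toReal)
      atTop atTop := by
  classical
  haveI := unif_prob
  haveI hGP : ∀ n : ℕ, IsProbabilityMeasure (graphMeasure μ (n+2)) := by
    intro n
    unfold graphMeasure
    infer_instance
  have hp0 : ∀ n : ℕ, 0 ≤ pEdge (n+2) := fun n => pEdge_nonneg (by omega)
  have hp1 : ∀ n : ℕ, pEdge (n+2) < 1 := fun n => pEdge_lt_one (by omega)
  set B := {x | lamFun K μ x < 1 - ε} with hBdef
  have hlam : Measurable (lamFun K μ) :=
    hKmeas.stronglyMeasurable.integral_prod_right'.measurable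
  have hBmeas : MeasurableSet B := measurableSet_lt hlam measurable_const
  have hlam0 : ∀ x, 0 ≤ lamFun K μ x := fun x => integral_nonneg fun y => hKnonneg x y
  have hεp : ∀ n : ℕ, 0 ≤ 1 - (1-ε) * pEdge (n+2) := by
    intro n
    have h1 : (1-ε) * pEdge (n+2) ≤ 1 * 1 :=
      mul_le_mul (by linarith) (hp1 n).le (hp0 n) zero_le_one
    linarith
  have hBpt : ∀ n : ℕ, ∀ x ∈ B, 0 ≤ 1 - lamFun K μ x * pEdge (n+2) ∧
      1 - (1-ε) * pEdge (n+2) ≤ 1 - lamFun K μ x * pEdge (n+2) ∧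
      1 - lamFun K μ x * pEdge (n+2) ≤ 1 := by
    intro n x hx
    have hxB : lamFun K μ x < 1 - ε := hx
    have h2 : lamFun K μ x * pEdge (n+2) ≤ (1-ε) * pEdge (n+2) :=
      mul_le_mul_of_nonneg_right hxB.le (hp0 n)
    have h3 : 0 ≤ lamFun K μ x * pEdge (n+2) := mul_nonneg (hlam0 x) (hp0 n)
    exact ⟨by linarith [hεp n], by linarith, by linarith⟩
  have hIntOn : ∀ n : ℕ, IntegrableOn
      (fun x => (1 - lamFun K μ x * pEdge (n+2)) ^ (n+1)) B μ := by
    intro n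
    refine Integrable.mono' (integrable_const 1)
      ((((hlam.mul_const _).const_sub 1).pow_const _).aestronglyMeasurable) ?_
    rw [ae_restrict_iff' hBmeas]
    refine ae_of_all _ fun x hx => ?_
    obtain ⟨h0, _, h1⟩ := hBpt n x hx
    rw [Real.norm_eq_abs, abs_of_nonneg (pow_nonneg h0 _)]
    exact pow_le_one₀ h0 h1
  have hpart1 : ∀ n : ℕ,
      (1 - (1 - ε) * pEdge (n+2)) ^ (n+1) * (μ B).toReal ≤
        ∫ x in B, (1 - lamFun K μ x * pEdge (n+2)) ^ (n+1) ∂μ ∧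
      ∫ x in B, (1 - lamFun K μ x * pEdge (n+2)) ^ (n+1) ∂μ ≤
        (graphMeasure μ (n+2) {ω |
          (∀ j, ¬ (graphOf K (n+2) ω.1 ω.2).Adj 0 j) ∧ ω.1 0 ∈ B}).toReal := by
    intro n
    constructor
    · have hm := setIntegral_mono_on
        (integrableOn_const (measure_ne_top μ B)) (hIntOn n) hBmeas
        (fun x hx => pow_le_pow_left₀ (hεp n) (hBpt n x hx).2.1 (n+1))
      rw [mul_comm]
      simpa [setIntegral_const, smul_eq_mul, measureReal_def] using hm
    · have hkey := key_identity μ K hKnonneg hKmeas B hBmeas n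
      have haeK : ∀ᵐ x ∂μ, Integrable (fun y => K x y) μ := hKint.prod_right_ae
      have hae : ∀ᵐ a ∂(μ.restrict B),
          ENNReal.ofReal ((1 - lamFun K μ a * pEdge (n+2)) ^ (n+1)) ≤
          (∫⁻ y, ENNReal.ofReal (1 - min 1 (K a y * pEdge (n+2))) ∂μ) ^ (n+1) := by
        filter_upwards [ae_restrict_of_ae haeK, ae_restrict_mem hBmeas] with a haK haB
        obtain ⟨h0, -, -⟩ := hBpt n a haB
        rw [ENNReal.ofReal_pow h0]
        refine pow_le_pow_left' ?_ _
        have hintKp : Integrable (fun y => 1 - K a y * pEdge (n+2)) μ :=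
          (integrable_const 1).sub (haK.mul_const _)
        have hint2 : Integrable (fun y => max (1 - K a y * pEdge (n+2)) 0) μ :=
          hintKp.pos_part
        have hval : ∫ y, (1 - K a y * pEdge (n+2)) ∂μ = 1 - lamFun K μ a * pEdge (n+2) := by
          rw [integral_sub (integrable_const 1) (haK.mul_const _), integral_const,
            probReal_univ, one_smul, integral_mul_const]
          rfl
        calc ENNReal.ofReal (1 - lamFun K μ a * pEdge (n+2))
            = ENNReal.ofReal (∫ y, (1 - K a y * pEdge (n+2)) ∂μ) := by rw [hval]
          _ ≤ ENNReal.ofReal (∫ y, max (1 - K a y * pEdge (n+2)) 0 ∂μ) :=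
              ENNReal.ofReal_le_ofReal
                (integral_mono hintKp hint2 fun y => le_max_left _ _)
          _ = ∫⁻ y, ENNReal.ofReal (max (1 - K a y * pEdge (n+2)) 0) ∂μ :=
              ofReal_integral_eq_lintegral_ofReal hint2
                (ae_of_all _ fun y => le_max_right _ _)
          _ = ∫⁻ y, ENNReal.ofReal (1 - K a y * pEdge (n+2)) ∂μ :=
              lintegral_congr fun y => ofReal_max_zero _
          _ ≤ ∫⁻ y, ENNReal.ofReal (1 - min 1 (K a y * pEdge (n+2))) ∂μ :=
              lintegral_mono fun y => ENNReal.ofReal_le_ofReal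
                (by have := min_le_right (1:ℝ) (K a y * pEdge (n+2)); linarith)
      have hle1 : ENNReal.ofReal (∫ x in B, (1 - lamFun K μ x * pEdge (n+2)) ^ (n+1) ∂μ) ≤
          graphMeasure μ (n+2) {ω |
            (∀ j, ¬ (graphOf K (n+2) ω.1 ω.2).Adj 0 j) ∧ ω.1 0 ∈ B} := by
        rw [ofReal_integral_eq_lintegral_ofReal (hIntOn n)
          ((ae_restrict_iff' hBmeas).2 (ae_of_all _ fun x hx =>
            pow_nonneg (hBpt n x hx).1 _)), hkey]
        exact lintegral_mono_ae hae
      have hmono := ENNReal.toReal_mono (measure_ne_top _ _) hle1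
      rwa [ENNReal.toReal_ofReal (setIntegral_nonneg hBmeas fun x hx =>
        pow_nonneg (hBpt n x hx).1 _)] at hmono
  refine ⟨hpart1, ?_⟩
  set c := (μ B).toReal with hcdef
  have hc0 : 0 < c := ENNReal.toReal_pos hB.ne' (measure_ne_top μ B)
  have hplim : Tendsto (fun n : ℕ => pEdge (n+2)) atTop (nhds 0) := by
    have h1 : Tendsto (fun x : ℝ => Real.log x / x) atTop (nhds 0) :=
      Real.isLittleO_log_id_atTop.tendsto_div_nhds_zero
    have h2 : Tendsto (fun n : ℕ => ((n+2 : ℕ) : ℝ)) atTop atTop :=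
      tendsto_natCast_atTop_atTop.comp (tendsto_add_atTop_nat 2)
    exact h1.comp h2
  have hδpos : (0:ℝ) < min 2⁻¹ (ε/2) := lt_min (by norm_num) (by linarith)
  have hδ : ∀ᶠ n : ℕ in atTop, pEdge (n+2) ≤ min 2⁻¹ (ε/2) :=
    hplim.eventually (eventually_le_nhds hδpos)
  have hbound : ∀ᶠ n : ℕ in atTop,
      Real.exp ((ε/2) * Real.log ((n:ℝ)+2)) * c ≤
        ((n:ℝ)+2) * ((1 - (1-ε) * pEdge (n+2)) ^ (n+1) * c) := by
    filter_upwards [hδ] with n hn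
    have hm2 : (0:ℝ) < (n:ℝ)+2 := by positivity
    have hcast : ((n+2:ℕ):ℝ) = (n:ℝ)+2 := by push_cast; ring
    set L := Real.log ((n:ℝ)+2) with hLdef
    have hL0 : 0 ≤ L := Real.log_nonneg (by linarith)
    set p := pEdge (n+2) with hpdef
    have hmp : ((n:ℝ)+2) * p = L := by
      rw [hpdef, pEdge, hcast, hLdef]
      field_simp
    set x := (1-ε) * p with hxdef
    have hp0' : 0 ≤ p := hp0 n
    have hx0 : 0 ≤ x := mul_nonneg (by linarith) hp0'
    have hxp : x ≤ p := by nlinarith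
    have hxhalf : x ≤ 2⁻¹ := hxp.trans (hn.trans (min_le_left _ _))
    have hxeps : x ≤ ε/2 := hxp.trans (hn.trans (min_le_right _ _))
    have h1x : (0:ℝ) < 1 - x := by linarith
    have hlogle : -(x / (1 - x)) ≤ Real.log (1 - x) := by
      have h2 := Real.log_le_sub_one_of_pos (inv_pos.2 h1x)
      rw [Real.log_inv] at h2
      have h3 : (1-x)⁻¹ - 1 = x / (1-x) := by field_simp; ring
      linarith
    have hfrac' : (1-ε) ≤ (1-ε/2) * (1-x) := by nlinarith
    have hmpx : ((n:ℝ)+2) * x = (1-ε) * L := by rw [hxdef, ← hmp]; ring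
    have hy : x / (1-x) * (1-x) = x := div_mul_cancel₀ _ h1x.ne'
    have h6 : ((n:ℝ)+2) * (x/(1-x)) ≤ (1-ε/2) * L := by
      rw [← mul_le_mul_iff_of_pos_right h1x]
      calc ((n:ℝ)+2) * (x/(1-x)) * (1-x) = ((n:ℝ)+2) * x := by
            rw [mul_assoc, hy]
        _ = (1-ε) * L := hmpx
        _ ≤ (1-ε/2) * (1-x) * L := by nlinarith
        _ = (1-ε/2) * L * (1-x) := by ring
    have h7 : ((n:ℝ)+1) * (x/(1-x)) ≤ (1-ε/2) * L := by
      have hynn : 0 ≤ x/(1-x) := div_nonneg hx0 h1x.le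
      nlinarith
    have hkey1 : Real.exp (-((1 - ε/2) * L)) ≤ (1 - x)^(n+1) := by
      have hpow : (1-x)^(n+1) = Real.exp (((n:ℝ)+1) * Real.log (1-x)) := by
        rw [show ((n:ℝ)+1) = ((n+1 : ℕ):ℝ) by push_cast; ring, ← Real.log_pow,
          Real.exp_log (pow_pos h1x _)]
      rw [hpow, Real.exp_le_exp]
      have h8 : ((n:ℝ)+1) * (-(x/(1-x))) ≤ ((n:ℝ)+1) * Real.log (1-x) :=
        mul_le_mul_of_nonneg_left hlogle (by positivity)
      nlinarith
    calc Real.exp ((ε/2) * L) * c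
        = Real.exp (L + -((1-ε/2) * L)) * c := by
          rw [show (ε/2) * L = L + -((1-ε/2) * L) by ring]
      _ = ((n:ℝ)+2) * Real.exp (-((1-ε/2) * L)) * c := by
          rw [Real.exp_add, Real.exp_log hm2]
      _ ≤ ((n:ℝ)+2) * (1-x)^(n+1) * c :=
          mul_le_mul_of_nonneg_right (mul_le_mul_of_nonneg_left hkey1 hm2.le) hc0.le
      _ = ((n:ℝ)+2) * ((1 - (1-ε) * p)^(n+1) * c) := by rw [hxdef]; ring
  have hRHS : Tendsto (fun n : ℕ => Real.exp ((ε/2) * Real.log ((n:ℝ)+2)) * c)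
      atTop atTop := by
    apply Tendsto.atTop_mul_const hc0
    apply Real.tendsto_exp_atTop.comp
    apply Tendsto.const_mul_atTop (by linarith : (0:ℝ) < ε/2)
    apply Real.tendsto_log_atTop.comp
    exact tendsto_atTop_add_const_right _ 2 tendsto_natCast_atTop_atTop
  have hlower : Tendsto
      (fun n : ℕ => ((n:ℝ)+2) * ((1 - (1-ε) * pEdge (n+2)) ^ (n+1) * c))
      atTop atTop := tendsto_atTop_mono' atTop hbound hRHS
  refine tendsto_atTop_mono' atTop (Eventually.of_forall fun n => ?_) hlower
  have h12 := le_trans (hpart1 n).1 (hpart1 n).2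
  exact mul_le_mul_of_nonneg_left h12 (by positivity)
end
end

section
/- Let X be a random point of S with law μ, let p ≥ 0, let k ≥ 1, and let x₁,…,x_k ∈ S be points with λ₂(xᵢ) < ∞ for all i. Then E[∏_{i=1}^k (1 − K(X,xᵢ)p)₊] ≤ 1 − p·∑_{i=1}^k λ(xᵢ) + (p²/2)·(∑_{i=1}^k λ₂(xᵢ))², where (t)₊ = max(t,0). -/
open MeasureTheory Filter Set

noncomputable section

lemma prod_max_bound {ι : Type*} (t : Finset ι) (a : ι → ℝ) (ha : ∀ i, 0 ≤ a i) :
    ∏ i ∈ t, max (1 - a i) 0 ≤ 1 - (∑ i ∈ t, a i) + (∑ i ∈ t, a i) ^ 2 / 2 := by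
  classical
  induction t using Finset.cons_induction with
  | empty => norm_num
  | cons i t hi ih =>
    rw [Finset.prod_cons, Finset.sum_cons]
    set s := ∑ j ∈ t, a j with hs
    have hs0 : 0 ≤ s := Finset.sum_nonneg fun j _ => ha j
    have hb := ha i
    rcases le_or_gt (a i) 1 with h1 | h1
    · have hm : max (1 - a i) 0 = 1 - a i := max_eq_left (by linarith)
      rw [hm]
      have key : (1 - a i) * (∏ j ∈ t, max (1 - a j) 0) ≤ (1 - a i) * (1 - s + s ^ 2 / 2) :=
        mul_le_mul_of_nonneg_left ih (by linarith)
      nlinarith [mul_nonneg hb (sq_nonneg s), sq_nonneg (a i)]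
    · have hm : max (1 - a i) 0 = 0 := max_eq_right (by linarith)
      rw [hm, zero_mul]
      nlinarith [sq_nonneg (a i + s - 1)]

lemma integrable_mul_of_sq {α : Type*} [MeasurableSpace α] {μ : Measure α} {f g : α → ℝ}
    (hfm : AEStronglyMeasurable f μ) (hgm : AEStronglyMeasurable g μ)
    (hf2 : Integrable (fun z => f z ^ 2) μ) (hg2 : Integrable (fun z => g z ^ 2) μ) :
    Integrable (fun z => f z * g z) μ := by
  refine ((hf2.add hg2).div_const 2).mono' (hfm.mul hgm) (Eventually.of_forall fun z => ?_)
  have : |f z * g z| ≤ (f z ^ 2 + g z ^ 2) / 2 := by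
    rw [abs_mul]
    nlinarith [sq_nonneg (|f z| - |g z|), sq_abs (f z), sq_abs (g z), abs_nonneg (f z),
      abs_nonneg (g z)]
  simpa [Real.norm_eq_abs, abs_mul] using this

lemma integral_mul_le_sqrt {α : Type*} [MeasurableSpace α] {μ : Measure α} {f g : α → ℝ}
    (hf0 : ∀ z, 0 ≤ f z) (hg0 : ∀ z, 0 ≤ g z)
    (hfm : AEStronglyMeasurable f μ) (hgm : AEStronglyMeasurable g μ)
    (hf2 : Integrable (fun z => f z ^ 2) μ) (hg2 : Integrable (fun z => g z ^ 2) μ) :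
    ∫ z, f z * g z ∂μ ≤ Real.sqrt (∫ z, f z ^ 2 ∂μ) * Real.sqrt (∫ z, g z ^ 2 ∂μ) := by
  set A := ∫ z, f z ^ 2 ∂μ with hA
  set B := ∫ z, g z ^ 2 ∂μ with hB
  have hA0 : 0 ≤ A := integral_nonneg fun z => sq_nonneg _
  have hB0 : 0 ≤ B := integral_nonneg fun z => sq_nonneg _
  have hrhs0 : 0 ≤ Real.sqrt A * Real.sqrt B := mul_nonneg (Real.sqrt_nonneg _) (Real.sqrt_nonneg _)
  rcases eq_or_lt_of_le hA0 with hA0' | hApos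
  · have hf0' : (fun z => f z ^ 2) =ᵐ[μ] 0 := by
      rw [← integral_eq_zero_iff_of_nonneg (fun z => sq_nonneg _) hf2]
      exact hA0'.symm
    have : (fun z => f z * g z) =ᵐ[μ] 0 := by
      filter_upwards [hf0'] with z hz
      have : f z = 0 := by simpa [pow_eq_zero_iff] using hz
      simp [this]
    rw [integral_congr_ae this]
    simpa using hrhs0
  rcases eq_or_lt_of_le hB0 with hB0' | hBpos
  · have hg0' : (fun z => g z ^ 2) =ᵐ[μ] 0 := by
      rw [← integral_eq_zero_iff_of_nonneg (fun z => sq_nonneg _) hg2]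
      exact hB0'.symm
    have : (fun z => f z * g z) =ᵐ[μ] 0 := by
      filter_upwards [hg0'] with z hz
      have : g z = 0 := by simpa [pow_eq_zero_iff] using hz
      simp [this]
    rw [integral_congr_ae this]
    simpa using hrhs0
  · set t := Real.sqrt (B / A) with ht_def
    have ht : 0 < t := Real.sqrt_pos.2 (div_pos hBpos hApos)
    have hptwise : ∀ z, f z * g z ≤ (t * f z ^ 2 + g z ^ 2 / t) / 2 := by
      intro z
      have hdiv : g z ^ 2 / t * t = g z ^ 2 := div_mul_cancel₀ _ ht.ne'
      nlinarith [sq_nonneg (t * f z - g z), ht, mul_pos ht ht]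
    have hint : Integrable (fun z => (t * f z ^ 2 + g z ^ 2 / t) / 2) μ :=
      ((hf2.const_mul t).add (hg2.div_const t)).div_const 2
    have hmul : Integrable (fun z => f z * g z) μ := integrable_mul_of_sq hfm hgm hf2 hg2
    have h1 : ∫ z, f z * g z ∂μ ≤ ∫ z, (t * f z ^ 2 + g z ^ 2 / t) / 2 ∂μ :=
      integral_mono hmul hint hptwise
    have h2 : ∫ z, (t * f z ^ 2 + g z ^ 2 / t) / 2 ∂μ = (t * A + B / t) / 2 := by
      rw [integral_div, integral_add (hf2.const_mul t) (hg2.div_const t), integral_const_mul,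
        integral_div]
    have hsA : Real.sqrt A ^ 2 = A := Real.sq_sqrt hA0
    have hsB : Real.sqrt B ^ 2 = B := Real.sq_sqrt hB0
    have hsApos : 0 < Real.sqrt A := Real.sqrt_pos.2 hApos
    have hsBpos : 0 < Real.sqrt B := Real.sqrt_pos.2 hBpos
    have ht_eq : t = Real.sqrt B / Real.sqrt A := by
      rw [ht_def, Real.sqrt_div hB0]
    have h3 : (t * A + B / t) / 2 = Real.sqrt A * Real.sqrt B := by
      rw [ht_eq]
      field_simp
      nlinarith [hsA, hsB, hsApos, hsBpos]
    calc ∫ z, f z * g z ∂μ ≤ (t * A + B / t) / 2 := h2 ▸ h1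
      _ = Real.sqrt A * Real.sqrt B := h3


/-- **Pointwise product bound for `k` points** (inside Lemma 3.1). For `p ≥ 0`, `k ≥ 1` and
points `x₁,…,x_k` with `λ₂(xᵢ) < ∞`,
`E[∏ᵢ (1-K(X,xᵢ)p)₊] ≤ 1 - p ∑ᵢ λ(xᵢ) + (p²/2)(∑ᵢ λ₂(xᵢ))²`. -/
theorem product_positive_part_bound_multi
    {S : Type*} [MetricSpace S] [TopologicalSpace.SeparableSpace S]
    [MeasurableSpace S] [BorelSpace S]
    (μ : Measure S) [IsProbabilityMeasure μ] (K : S → S → ℝ)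
    (hKsymm : ∀ x y, K x y = K y x)
    (hKnonneg : ∀ x y, 0 ≤ K x y)
    (hKmeas : Measurable (Function.uncurry K))
    (hKint : Integrable (Function.uncurry K) (μ.prod μ))
    (p : ℝ) (hp : 0 ≤ p) (k : ℕ) (hk : 1 ≤ k) (x : Fin k → S)
    (hx : ∀ i, Integrable (fun z => (K (x i) z) ^ 2) μ) :
    ∫ z, ∏ i : Fin k, max (1 - K z (x i) * p) 0 ∂μ ≤
      1 - p * ∑ i : Fin k, lamFun K μ (x i)
        + (p ^ 2 / 2) * (∑ i : Fin k, lam2Fun K μ (x i)) ^ 2 := by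

  classical
  set f : Fin k → S → ℝ := fun i z => K z (x i) with hf_def
  have hmeas : ∀ i, Measurable (f i) := fun i =>
    hKmeas.comp (measurable_id.prodMk measurable_const)
  have hf0 : ∀ i z, 0 ≤ f i z := fun i z => hKnonneg _ _
  have hf2 : ∀ i, Integrable (fun z => f i z ^ 2) μ := fun i =>
    (hx i).congr (Eventually.of_forall fun z => by simp only [f]; rw [hKsymm])
  have hfL2 : ∀ i, MemLp (f i) 2 μ := fun i =>
    (memLp_two_iff_integrable_sq (hmeas i).aestronglyMeasurable).2 (hf2 i)
  have hfint : ∀ i, Integrable (f i) μ := fun i => (hfL2 i).integrable one_le_two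
  set s : S → ℝ := fun z => ∑ i : Fin k, f i z with hs_def
  have hsL2 : MemLp s 2 μ := memLp_finset_sum Finset.univ fun i _ => hfL2 i
  have hs2int : Integrable (fun z => s z ^ 2) μ :=
    (memLp_two_iff_integrable_sq hsL2.1).1 hsL2
  have hsint : Integrable s μ := integrable_finset_sum _ fun i _ => hfint i
  -- pointwise bound
  have h_ptwise : ∀ z, ∏ i : Fin k, max (1 - K z (x i) * p) 0 ≤
      1 - p * s z + p ^ 2 / 2 * s z ^ 2 := by
    intro z
    have h := prod_max_bound Finset.univ (fun i => K z (x i) * p)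
      (fun i => mul_nonneg (hKnonneg _ _) hp)
    rw [← Finset.sum_mul] at h
    have h2 : 1 - (∑ i : Fin k, K z (x i)) * p + ((∑ i : Fin k, K z (x i)) * p) ^ 2 / 2
        = 1 - p * s z + p ^ 2 / 2 * s z ^ 2 := by
      simp only [s, f]; ring
    linarith [h, h2.ge, h2.le]
  -- integrability of the LHS integrand
  have hLHS_meas : Measurable (fun z => ∏ i : Fin k, max (1 - K z (x i) * p) 0) :=
    Finset.measurable_prod _ fun i _ =>
      (measurable_const.sub ((hmeas i).mul_const p)).max measurable_const
  have hLHS_int : Integrable (fun z => ∏ i : Fin k, max (1 - K z (x i) * p) 0) μ := by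
    refine (integrable_const (1 : ℝ)).mono' hLHS_meas.aestronglyMeasurable
      (Eventually.of_forall fun z => ?_)
    have h01 : ∀ i ∈ Finset.univ, (0:ℝ) ≤ max (1 - K z (x i) * p) 0 ∧
        max (1 - K z (x i) * p) 0 ≤ 1 := fun i _ =>
      ⟨le_max_right _ _, max_le (by nlinarith [mul_nonneg (hKnonneg z (x i)) hp]) one_pos.le⟩
    have hpn : (0:ℝ) ≤ ∏ i : Fin k, max (1 - K z (x i) * p) 0 :=
      Finset.prod_nonneg fun i hi => (h01 i hi).1
    have hp1 : ∏ i : Fin k, max (1 - K z (x i) * p) 0 ≤ 1 :=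
      Finset.prod_le_one (fun i hi => (h01 i hi).1) (fun i hi => (h01 i hi).2)
    rw [Real.norm_eq_abs, abs_of_nonneg hpn]
    simpa using hp1
  have hF_int : Integrable (fun z => 1 - p * s z + p ^ 2 / 2 * s z ^ 2) μ :=
    ((integrable_const (1:ℝ)).sub (hsint.const_mul p)).add (hs2int.const_mul (p ^ 2 / 2))
  have step1 : ∫ z, ∏ i : Fin k, max (1 - K z (x i) * p) 0 ∂μ ≤
      ∫ z, (1 - p * s z + p ^ 2 / 2 * s z ^ 2) ∂μ :=
    integral_mono hLHS_int hF_int h_ptwise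
  -- compute ∫ s
  have hint_s : ∫ z, s z ∂μ = ∑ i : Fin k, lamFun K μ (x i) := by
    rw [hs_def, integral_finset_sum _ fun i _ => hfint i]
    refine Finset.sum_congr rfl fun i _ => ?_
    unfold lamFun
    refine integral_congr_ae (Eventually.of_forall fun z => ?_)
    simp only [f]; rw [hKsymm]
  have step2 : ∫ z, (1 - p * s z + p ^ 2 / 2 * s z ^ 2) ∂μ =
      1 - p * ∑ i : Fin k, lamFun K μ (x i) + p ^ 2 / 2 * ∫ z, s z ^ 2 ∂μ := by
    have hF1 : Integrable (fun z => 1 - p * s z) μ :=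
      (integrable_const (1:ℝ)).sub (hsint.const_mul p)
    have e1 : ∫ z, (1 - p * s z + p ^ 2 / 2 * s z ^ 2) ∂μ
        = ∫ z, (1 - p * s z) ∂μ + ∫ z, p ^ 2 / 2 * s z ^ 2 ∂μ :=
      integral_add hF1 (hs2int.const_mul (p ^ 2 / 2))
    have e2 : ∫ z, (1 - p * s z) ∂μ = ∫ z, (1:ℝ) ∂μ - ∫ z, p * s z ∂μ :=
      integral_sub (integrable_const (1:ℝ)) (hsint.const_mul p)
    rw [e1, e2, integral_const, integral_const_mul, integral_const_mul, hint_s]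
    simp
  -- Cauchy–Schwarz step
  have hlam2 : ∀ i, Real.sqrt (∫ z, f i z ^ 2 ∂μ) = lam2Fun K μ (x i) := by
    intro i
    unfold lam2Fun
    congr 1
    refine integral_congr_ae (Eventually.of_forall fun z => ?_)
    simp only [f]; rw [hKsymm]
  have hmul : ∀ i j : Fin k, Integrable (fun z => f i z * f j z) μ := fun i j =>
    integrable_mul_of_sq (hmeas i).aestronglyMeasurable (hmeas j).aestronglyMeasurable
      (hf2 i) (hf2 j)
  have hexp : ∫ z, s z ^ 2 ∂μ = ∑ i : Fin k, ∑ j : Fin k, ∫ z, f i z * f j z ∂μ := by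
    have : (fun z => s z ^ 2) = fun z => ∑ i : Fin k, ∑ j : Fin k, f i z * f j z := by
      funext z
      rw [sq, hs_def, Finset.sum_mul_sum]
    rw [this, integral_finset_sum _ fun i _ => integrable_finset_sum _ fun j _ => hmul i j]
    exact Finset.sum_congr rfl fun i _ => integral_finset_sum _ fun j _ => hmul i j
  have step3 : ∫ z, s z ^ 2 ∂μ ≤ (∑ i : Fin k, lam2Fun K μ (x i)) ^ 2 := by
    rw [hexp, sq, Finset.sum_mul_sum]
    refine Finset.sum_le_sum fun i _ => Finset.sum_le_sum fun j _ => ?_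
    rw [← hlam2 i, ← hlam2 j]
    exact integral_mul_le_sqrt (hf0 i) (hf0 j) (hmeas i).aestronglyMeasurable
      (hmeas j).aestronglyMeasurable (hf2 i) (hf2 j)
  have hc : (0:ℝ) ≤ p ^ 2 / 2 := by positivity
  calc ∫ z, ∏ i : Fin k, max (1 - K z (x i) * p) 0 ∂μ
      ≤ 1 - p * ∑ i : Fin k, lamFun K μ (x i) + p ^ 2 / 2 * ∫ z, s z ^ 2 ∂μ := by
        rw [← step2]; exact step1
    _ ≤ 1 - p * ∑ i : Fin k, lamFun K μ (x i)
        + p ^ 2 / 2 * (∑ i : Fin k, lam2Fun K μ (x i)) ^ 2 := by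
        have := mul_le_mul_of_nonneg_left step3 hc
        linarith
end
end

section
/- Given a separable metric space (S,d) with a Borel probability measure μ, there exists a sequence of finite partitions P_m = {A_{m,1},…,A_{m,M_m}} of S, m ≥ 1, such that: (a) each A_{m,i} is a Borel measurable set with μ(∂A_{m,i}) = 0, where ∂ denotes topological boundary; (b) P_{m+1} refines P_m, i.e. each A_{m,i} is a union of cells of P_{m+1}; (c) for μ-almost every x ∈ S, diam(A_{m,i_m(x)}) → 0 as m → ∞, where A_{m,i_m(x)} denotes the cell of P_m containing x and diam(A) = sup{d(x,y) : x,y ∈ A}. -/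
open MeasureTheory Filter Set

/-- **Existence of good partition sequences** (Lemma 3.4, i.e. Lemma 7.1 of [BJR07]).
For a separable metric space `S` with Borel probability measure `μ`, there is a sequence of
finite Borel partitions `P_m = {A m 0, …, A m (M m - 1)}` of `S` such that each cell has
`μ`-null topological boundary, `P_{m+1}` refines `P_m` (each cell of `P_m` is the union of the
cells of `P_{m+1}` it contains), and for `μ`-a.e. `x` the diameter of the cell of `P_m`
containing `x` tends to `0` as `m → ∞`. -/
theorem exists_partition_sequence
    {S : Type*} [MetricSpace S] [TopologicalSpace.SeparableSpace S]
    [MeasurableSpace S] [BorelSpace S]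
    (μ : Measure S) [IsProbabilityMeasure μ] :
    ∃ (M : ℕ → ℕ) (A : ℕ → ℕ → Set S),
      (∀ m, 1 ≤ M m) ∧
      -- each `P_m` covers `S`
      (∀ m, (⋃ i ∈ Finset.range (M m), A m i) = Set.univ) ∧
      -- the cells of `P_m` are pairwise disjoint
      (∀ m, ∀ i < M m, ∀ j < M m, i ≠ j → Disjoint (A m i) (A m j)) ∧
      -- (a) each cell is measurable with null boundary
      (∀ m, ∀ i < M m, MeasurableSet (A m i)) ∧
      (∀ m, ∀ i < M m, μ (frontier (A m i)) = 0) ∧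
      -- (b) `P_{m+1}` refines `P_m`: each cell of `P_m` is a union of cells of `P_{m+1}`
      (∀ m, ∀ i < M m,
        A m i = ⋃ j ∈ {j | j < M (m+1) ∧ A (m+1) j ⊆ A m i}, A (m+1) j) ∧
      -- (c) for a.e. `x`, the diameter of the cell containing `x` tends to `0`
      (∀ᵐ x ∂μ, ∀ ε : ENNReal, 0 < ε → ∃ m₀ : ℕ, ∀ m ≥ m₀, ∀ i < M m,
        x ∈ A m i → EMetric.diam (A m i) < ε) := by
  -- `S` is nonempty since it carries a probability measure
  have hne : Nonempty S := by
    by_contra h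
    rw [not_nonempty_iff] at h
    have h1 := measure_univ (μ := μ)
    rw [Set.univ_eq_empty_iff.2 h] at h1
    simp at h1
  -- a dense sequence
  obtain ⟨x, hx⟩ := TopologicalSpace.exists_dense_seq S
  -- choose good radii
  have hab : ∀ k : ℕ, (1:ℝ) / 2 ^ (k + 1) < 1 / 2 ^ k := by
    intro k
    apply div_lt_div_of_pos_left one_pos (by positivity)
    exact pow_lt_pow_right₀ one_lt_two (Nat.lt_succ_self k)
  choose r hr hμr using fun p : ℕ =>
    MeasureTheory.exists_null_frontier_thickening μ {x p.unpair.1} (hab p.unpair.2)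
  -- the generating open balls
  set g : ℕ → Set S := fun p => Metric.thickening (r p) {x p.unpair.1} with hg
  have hg_open : ∀ p, IsOpen (g p) := fun p => Metric.isOpen_thickening
  have hg_front : ∀ p, μ (frontier (g p)) = 0 := fun p => hμr p
  -- the cells
  set C : ℕ → ℕ → Set S := fun k i => bif i.testBit k then g k else (g k)ᶜ with hC
  set A : ℕ → ℕ → Set S := fun m i => ⋂ k ∈ Finset.range m, C k i with hA
  have memA : ∀ m i (y : S), y ∈ A m i ↔ ∀ k < m, y ∈ C k i := by
    intro m i y
    simp [hA, Set.mem_iInter₂]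
  -- bit extraction from membership
  have bitA : ∀ m i (y : S), y ∈ A m i → ∀ k < m, (i.testBit k = true ↔ y ∈ g k) := by
    intro m i y hy k hk
    have h := (memA m i y).1 hy k hk
    cases hb : i.testBit k <;> simp [hC, hb] at h ⊢ <;> simp [h]
  -- the cover
  have cover : ∀ m (y : S), ∃ i < 2 ^ m, y ∈ A m i := by
    intro m y
    induction m with
    | zero => exact ⟨0, Nat.one_pos, by simp [hA]⟩
    | succ m ih =>
      obtain ⟨i, him, hyi⟩ := ih
      by_cases hy : y ∈ g m
      · refine ⟨2 ^ m + i, ?_, ?_⟩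
        · have : (2:ℕ) ^ (m + 1) = 2 ^ m + 2 ^ m := by ring
          omega
        · rw [memA]
          intro k hk
          rcases Nat.lt_succ_iff_lt_or_eq.1 hk with hk' | hk'
          · have hb : (2 ^ m + i).testBit k = i.testBit k :=
              Nat.testBit_two_pow_add_gt hk' i
            have := (memA m i y).1 hyi k hk'
            simpa [hC, hb] using this
          · subst hk'
            have hb : (2 ^ k + i).testBit k = true := by
              rw [Nat.testBit_two_pow_add_eq, Nat.testBit_lt_two_pow him]
              rfl
            simp [hC, hb, hy]
      · refine ⟨i, lt_trans him (by exact Nat.pow_lt_pow_right one_lt_two (Nat.lt_succ_self m)), ?_⟩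
        rw [memA]
        intro k hk
        rcases Nat.lt_succ_iff_lt_or_eq.1 hk with hk' | hk'
        · exact (memA m i y).1 hyi k hk'
        · subst hk'
          have hb : i.testBit k = false := Nat.testBit_lt_two_pow him
          simp [hC, hb, hy]
  -- disjointness
  have disj : ∀ m, ∀ i < 2 ^ m, ∀ j < 2 ^ m, i ≠ j → Disjoint (A m i) (A m j) := by
    intro m i hi j hj hij
    rw [Set.disjoint_left]
    intro y hyi hyj
    apply hij
    apply Nat.eq_of_testBit_eq
    intro k
    by_cases hk : k < m
    · have h1 := bitA m i y hyi k hk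
      have h2 := bitA m j y hyj k hk
      by_cases hyg : y ∈ g k
      · rw [h1.2 hyg, h2.2 hyg]
      · cases hbi : i.testBit k
        · cases hbj : j.testBit k
          · rfl
          · exact absurd (h2.1 hbj) hyg
        · exact absurd (h1.1 hbi) hyg
    · rw [Nat.testBit_lt_two_pow (lt_of_lt_of_le hi (Nat.pow_le_pow_right (by norm_num) (le_of_not_gt hk))),
        Nat.testBit_lt_two_pow (lt_of_lt_of_le hj (Nat.pow_le_pow_right (by norm_num) (le_of_not_gt hk)))]
  -- measurability of cells
  have measC : ∀ k i, MeasurableSet (C k i) := by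
    intro k i
    cases hb : i.testBit k
    · simpa [hC, hb] using (hg_open k).measurableSet.compl
    · simpa [hC, hb] using (hg_open k).measurableSet
  have measA : ∀ m i, MeasurableSet (A m i) := fun m i =>
    Finset.measurableSet_biInter _ (fun k _ => measC k i)
  -- null frontier of cells
  have frontC : ∀ k i, μ (frontier (C k i)) = 0 := by
    intro k i
    cases hb : i.testBit k
    · simpa [hC, hb, frontier_compl] using hg_front k
    · simpa [hC, hb] using hg_front k
  have frontA : ∀ m i, μ (frontier (A m i)) = 0 := by
    intro m i
    have key : ∀ t : Finset ℕ, μ (frontier (⋂ k ∈ t, C k i)) = 0 := by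
      intro t
      induction t using Finset.induction_on with
      | empty => simp
      | @insert a t ha ih =>
        rw [Finset.set_biInter_insert]
        apply measure_mono_null (frontier_inter_subset _ _)
        apply measure_union_null
        · exact measure_mono_null (Set.inter_subset_left) (frontC a i)
        · exact measure_mono_null (Set.inter_subset_right) ih
    exact key (Finset.range m)
  -- a cell of `P_{m+1}` meeting a cell of `P_m` is contained in it
  have sub : ∀ m i j (y : S), y ∈ A m i → y ∈ A (m+1) j → A (m+1) j ⊆ A m i := by
    intro m i j y hyi hyj z hz
    rw [memA] at hz ⊢
    intro k hk
    have h1 := bitA m i y hyi k hk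
    have h2 := bitA (m+1) j y hyj k (lt_trans hk (Nat.lt_succ_self m))
    have hbits : j.testBit k = i.testBit k := by
      by_cases hyg : y ∈ g k
      · rw [h1.2 hyg, h2.2 hyg]
      · cases hbi : i.testBit k
        · cases hbj : j.testBit k
          · rfl
          · exact absurd (h2.1 hbj) hyg
        · exact absurd (h1.1 hbi) hyg
    have := hz k (lt_trans hk (Nat.lt_succ_self m))
    simpa [hC, hbits] using this
  refine ⟨fun m => 2 ^ m, A, fun m => Nat.one_le_two_pow, ?_, disj, fun m i _ => measA m i,
    fun m i _ => frontA m i, ?_, ?_⟩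
  · -- cover
    intro m
    rw [Set.eq_univ_iff_forall]
    intro y
    obtain ⟨i, hi, hyi⟩ := cover m y
    exact Set.mem_biUnion (Finset.mem_range.2 hi) hyi
  · -- refinement
    intro m i _
    apply Set.Subset.antisymm
    · intro y hy
      obtain ⟨j, hj, hyj⟩ := cover (m+1) y
      exact Set.mem_biUnion ⟨hj, sub m i j y hy hyj⟩ hyj
    · intro y hy
      simp only [Set.mem_iUnion, Set.mem_setOf_eq] at hy
      obtain ⟨j, ⟨_, hsub⟩, hyj⟩ := hy
      exact hsub hyj
  · -- a.e. shrinking diameters (in fact holds for every point)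
    apply Filter.Eventually.of_forall
    intro y ε hε
    -- find a real δ > 0 with ofReal δ < ε
    obtain ⟨δ, hδpos, hδε⟩ : ∃ δ : ℝ, 0 < δ ∧ ENNReal.ofReal δ < ε := by
      rcases eq_or_ne ε ⊤ with h | h
      · exact ⟨1, one_pos, by simp [h]⟩
      · have htpos : 0 < ε.toReal := ENNReal.toReal_pos hε.ne' h
        refine ⟨ε.toReal / 2, by positivity, ?_⟩
        rw [ENNReal.ofReal_lt_iff_lt_toReal (by positivity) h]
        linarith
    -- find k with (1/2)^k < δ/2
    obtain ⟨k, hk⟩ : ∃ k : ℕ, (1/2 : ℝ) ^ k < δ / 2 :=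
      exists_pow_lt_of_lt_one (by positivity) (by norm_num)
    have hk' : (1:ℝ) / 2 ^ k < δ / 2 := by
      rwa [div_pow, one_pow] at hk
    -- find n with x n close to y
    obtain ⟨n, hn⟩ := hx.exists_dist_lt y (show (0:ℝ) < 1 / 2 ^ (k+1) by positivity)
    set p := Nat.pair n k with hp
    have hpu : p.unpair = (n, k) := Nat.unpair_pair n k
    have hrp := hr p
    rw [hpu] at hrp
    have hgeq : g p = Metric.ball (x n) (r p) := by
      simp [hg, hpu, Metric.thickening_singleton]
    -- y belongs to the generator g p
    have hyg : y ∈ g p := by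
      rw [hgeq, Metric.mem_ball]
      calc dist y (x n) < 1 / 2 ^ (k+1) := hn
        _ < r p := hrp.1
    -- the generator has small diameter
    have hdiam : EMetric.diam (g p) < ε := by
      have h1 : g p ⊆ Metric.ball (x n) (r p) := hgeq.subset
      calc EMetric.diam (g p) ≤ EMetric.diam (Metric.ball (x n) (r p)) :=
            EMetric.diam_mono h1
        _ ≤ 2 * ENNReal.ofReal (r p) := by
            rw [← Metric.emetric_ball]; exact EMetric.diam_ball
        _ ≤ 2 * ENNReal.ofReal (δ / 2) := by
            gcongr
            exact le_of_lt (lt_trans hrp.2 hk')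
        _ = ENNReal.ofReal δ := by
            rw [← ENNReal.ofReal_ofNat, ← ENNReal.ofReal_mul (by norm_num)]
            congr 1
            ring
        _ < ε := hδε
    refine ⟨p + 1, fun m hm i _ hyi => ?_⟩
    have hpm : p < m := hm
    have hbit : i.testBit p = true := (bitA m i y hyi p hpm).2 hyg
    have hsub : A m i ⊆ g p := by
      intro z hz
      have := (memA m i z).1 hz p hpm
      simpa [hC, hbit] using this
    exact lt_of_le_of_lt (EMetric.diam_mono hsub) hdiam
end

section
/- Suppose K is irreducible and continuous at (μ⊗μ)-almost every point of S×S. Then for every ε > 0 there exist m ≥ 1 and a connected component C_m of the partition graph H_m such that μ(S \ ⋃_{i∈C_m} A_{m,i}) < ε. -/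
open MeasureTheory Filter Set

noncomputable section

/-- The partition graph `H_m` associated to the partition sequence `(M, A)`: its vertices are
the indices `i < M m` whose cell has positive measure, and `i ~ j` iff the infimum of `K` on
`A m i × A m j` is positive (equivalently the lower approximation kernel `K_m` is positive
there). -/
def partitionGraph {S : Type*} [MeasurableSpace S] (K : S → S → ℝ) (μ : Measure S)
    (M : ℕ → ℕ) (A : ℕ → ℕ → Set S) (m : ℕ) : SimpleGraph ℕ where
  Adj i j := i ≠ j ∧ i < M m ∧ j < M m ∧ 0 < μ (A m i) ∧ 0 < μ (A m j) ∧
    ∃ β > 0, ∀ x ∈ A m i, ∀ y ∈ A m j, β ≤ K x y ∧ β ≤ K y x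
  symm := by
    constructor
    rintro i j ⟨hne, hi, hj, hμi, hμj, β, hβ, h⟩
    exact ⟨hne.symm, hj, hi, hμj, hμi, β, hβ,
      fun y hy x hx => ⟨(h x hx y hy).2, (h x hx y hy).1⟩⟩
  loopless := ⟨fun i h => h.1 rfl⟩


namespace PGaux

/-- The condition for a pair of cells `(i,j)` of the `m`-th partition to be "linked":
both are genuine positive-measure cells lying in the same component of `H_m`. -/
def scCond {S : Type*} [MeasurableSpace S] (K : S → S → ℝ) (μ : Measure S) (M : ℕ → ℕ)
    (A : ℕ → ℕ → Set S) (m i j : ℕ) : Prop :=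
  i < M m ∧ j < M m ∧ 0 < μ (A m i) ∧ 0 < μ (A m j) ∧
    (partitionGraph K μ M A m).connectedComponentMk i =
      (partitionGraph K μ M A m).connectedComponentMk j

/-- The set of pairs of points whose `m`-cells are in the same component of `H_m`. -/
def scSet {S : Type*} [MeasurableSpace S] (K : S → S → ℝ) (μ : Measure S) (M : ℕ → ℕ)
    (A : ℕ → ℕ → Set S) (m : ℕ) : Set (S × S) :=
  ⋃ i, ⋃ j, (A m i ×ˢ A m j) ∩ {_p | scCond K μ M A m i j}

/-- Pairs of points whose cells are eventually in the same component. -/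
def relSet {S : Type*} [MeasurableSpace S] (K : S → S → ℝ) (μ : Measure S) (M : ℕ → ℕ)
    (A : ℕ → ℕ → Set S) : Set (S × S) :=
  ⋃ m₀ : ℕ, ⋂ m, ⋂ (_ : m₀ ≤ m), scSet K μ M A m

lemma mem_scSet_iff {S : Type*} [MeasurableSpace S] {K : S → S → ℝ} {μ : Measure S}
    {M : ℕ → ℕ} {A : ℕ → ℕ → Set S} {m : ℕ} {p : S × S} :
    p ∈ scSet K μ M A m ↔ ∃ i j, p.1 ∈ A m i ∧ p.2 ∈ A m j ∧ scCond K μ M A m i j := by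
  simp only [scSet, Set.mem_iUnion, Set.mem_inter_iff, Set.mem_prod, Set.mem_setOf_eq]
  tauto

lemma measurableSet_scSet {S : Type*} [MeasurableSpace S] {K : S → S → ℝ} {μ : Measure S}
    {M : ℕ → ℕ} {A : ℕ → ℕ → Set S} {m : ℕ} (hmeas : ∀ i < M m, MeasurableSet (A m i)) :
    MeasurableSet (scSet K μ M A m) := by
  refine MeasurableSet.iUnion fun i => MeasurableSet.iUnion fun j => ?_
  by_cases hc : scCond K μ M A m i j
  · exact ((hmeas i hc.1).prod (hmeas j hc.2.1)).inter (MeasurableSet.const _)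
  · have : {_p : S × S | scCond K μ M A m i j} = ∅ := by
      ext p; simp [hc]
    rw [this, Set.inter_empty]
    exact MeasurableSet.empty

lemma measurableSet_relSet {S : Type*} [MeasurableSpace S] {K : S → S → ℝ} {μ : Measure S}
    {M : ℕ → ℕ} {A : ℕ → ℕ → Set S}
    (hmeas : ∀ m, ∀ i < M m, MeasurableSet (A m i)) :
    MeasurableSet (relSet K μ M A) :=
  MeasurableSet.iUnion fun _ => MeasurableSet.iInter fun m =>
    MeasurableSet.iInter fun _ => measurableSet_scSet (hmeas m)

lemma cell_unique {S : Type*} {M : ℕ → ℕ} {A : ℕ → ℕ → Set S}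
    (hdisj : ∀ m, ∀ i < M m, ∀ j < M m, i ≠ j → Disjoint (A m i) (A m j))
    {m i j : ℕ} {x : S} (hi : i < M m) (hj : j < M m)
    (hxi : x ∈ A m i) (hxj : x ∈ A m j) : i = j := by
  by_contra h
  exact Set.disjoint_left.mp (hdisj m i hi j hj h) hxi hxj

lemma scSet_trans {S : Type*} [MeasurableSpace S] {K : S → S → ℝ} {μ : Measure S}
    {M : ℕ → ℕ} {A : ℕ → ℕ → Set S}
    (hdisj : ∀ m, ∀ i < M m, ∀ j < M m, i ≠ j → Disjoint (A m i) (A m j))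
    {m : ℕ} {a b c : S} (h1 : (a, b) ∈ scSet K μ M A m) (h2 : (b, c) ∈ scSet K μ M A m) :
    (a, c) ∈ scSet K μ M A m := by
  obtain ⟨i, j, hai, hbj, hi, hj, hμi, hμj, hcomp⟩ := mem_scSet_iff.mp h1
  obtain ⟨i', j', hbi', hcj', hi', hj', hμi', hμj', hcomp'⟩ := mem_scSet_iff.mp h2
  have hji' : j = i' := cell_unique hdisj hj hi' hbj hbi'
  exact mem_scSet_iff.mpr ⟨i, j', hai, hcj', hi, hj', hμi, hμj',
    hcomp.trans (hji' ▸ hcomp')⟩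

lemma relSet_trans {S : Type*} [MeasurableSpace S] {K : S → S → ℝ} {μ : Measure S}
    {M : ℕ → ℕ} {A : ℕ → ℕ → Set S}
    (hdisj : ∀ m, ∀ i < M m, ∀ j < M m, i ≠ j → Disjoint (A m i) (A m j))
    {a b c : S} (h1 : (a, b) ∈ relSet K μ M A) (h2 : (b, c) ∈ relSet K μ M A) :
    (a, c) ∈ relSet K μ M A := by
  obtain ⟨m₁, hm₁⟩ := Set.mem_iUnion.mp h1
  obtain ⟨m₂, hm₂⟩ := Set.mem_iUnion.mp h2
  simp only [Set.mem_iInter] at hm₁ hm₂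
  refine Set.mem_iUnion.mpr ⟨max m₁ m₂,
    Set.mem_iInter.mpr fun m => Set.mem_iInter.mpr fun hm => ?_⟩
  exact scSet_trans hdisj (hm₁ m (le_trans (le_max_left _ _) hm))
    (hm₂ m (le_trans (le_max_right _ _) hm))

lemma ae_prod_fst {α β : Type*} [MeasurableSpace α] [MeasurableSpace β]
    {μ : Measure α} {ν : Measure β} [SigmaFinite ν] {P : α → Prop}
    (h : ∀ᵐ x ∂μ, P x) : ∀ᵐ p ∂μ.prod ν, P p.1 := by
  rw [ae_iff] at h ⊢
  refine measure_mono_null (fun p hp => ?_)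
    (by rw [Measure.prod_prod, measure_toMeasurable, h, zero_mul] :
      (μ.prod ν) (toMeasurable μ {x | ¬P x} ×ˢ (univ : Set β)) = 0)
  exact ⟨subset_toMeasurable μ _ hp, trivial⟩

lemma ae_prod_snd {α β : Type*} [MeasurableSpace α] [MeasurableSpace β]
    {μ : Measure α} {ν : Measure β} [SigmaFinite ν] {P : β → Prop}
    (h : ∀ᵐ y ∂ν, P y) : ∀ᵐ p ∂μ.prod ν, P p.2 := by
  rw [ae_iff] at h ⊢
  refine measure_mono_null (fun p hp => ?_)
    (by rw [Measure.prod_prod, measure_toMeasurable, h, mul_zero] :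
      (μ.prod ν) ((univ : Set α) ×ˢ toMeasurable ν {y | ¬P y}) = 0)
  exact ⟨trivial, subset_toMeasurable ν _ hp⟩

lemma eventually_mem_scSet {S : Type*} [MetricSpace S] [MeasurableSpace S]
    {K : S → S → ℝ} {μ : Measure S} {M : ℕ → ℕ} {A : ℕ → ℕ → Set S}
    (hKsymm : ∀ x y, K x y = K y x)
    (hcover : ∀ m, (⋃ i ∈ Finset.range (M m), A m i) = Set.univ)
    {x y : S}
    (hx1 : ∀ m, ∀ i < M m, x ∈ A m i → 0 < μ (A m i))
    (hy1 : ∀ m, ∀ i < M m, y ∈ A m i → 0 < μ (A m i))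
    (hx2 : ∀ e : ENNReal, 0 < e → ∃ m₀, ∀ m ≥ m₀, ∀ i < M m,
      x ∈ A m i → EMetric.diam (A m i) < e)
    (hy2 : ∀ e : ENNReal, 0 < e → ∃ m₀, ∀ m ≥ m₀, ∀ i < M m,
      y ∈ A m i → EMetric.diam (A m i) < e)
    (hc : ContinuousAt (Function.uncurry K) (x, y))
    (hK : 0 < K x y) :
    ∃ m₁, ∀ m ≥ m₁, (x, y) ∈ scSet K μ M A m := by
  have hmem : {p : S × S | K x y / 2 < Function.uncurry K p} ∈ nhds (x, y) :=
    hc (Ioi_mem_nhds (by simp only [Function.uncurry_apply_pair]; linarith))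
  rw [Metric.mem_nhds_iff] at hmem
  obtain ⟨δ, hδ, hball⟩ := hmem
  have hball' : ∀ x' y' : S, dist x' x < δ → dist y' y < δ → K x y / 2 < K x' y' := by
    intro x' y' h1 h2
    have : ((x', y') : S × S) ∈ Metric.ball (x, y) δ := by
      rw [Metric.mem_ball, Prod.dist_eq]
      exact max_lt h1 h2
    simpa [Function.uncurry] using hball this
  obtain ⟨ma, hma⟩ := hx2 (ENNReal.ofReal δ) (ENNReal.ofReal_pos.mpr hδ)
  obtain ⟨mb, hmb⟩ := hy2 (ENNReal.ofReal δ) (ENNReal.ofReal_pos.mpr hδ)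
  refine ⟨max ma mb, fun m hm => ?_⟩
  have hxcell : ∃ i, i < M m ∧ x ∈ A m i := by
    have hx' : x ∈ ⋃ i ∈ Finset.range (M m), A m i := by rw [hcover m]; trivial
    simpa using hx'
  have hycell : ∃ j, j < M m ∧ y ∈ A m j := by
    have hy' : y ∈ ⋃ i ∈ Finset.range (M m), A m i := by rw [hcover m]; trivial
    simpa using hy'
  obtain ⟨i, hi, hxi⟩ := hxcell
  obtain ⟨j, hj, hyj⟩ := hycell
  have hμi := hx1 m i hi hxi
  have hμj := hy1 m j hj hyj
  have hcomp : (partitionGraph K μ M A m).connectedComponentMk i =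
      (partitionGraph K μ M A m).connectedComponentMk j := by
    by_cases hij : i = j
    · rw [hij]
    · refine SimpleGraph.ConnectedComponent.sound (SimpleGraph.Adj.reachable ?_)
      show i ≠ j ∧ i < M m ∧ j < M m ∧ 0 < μ (A m i) ∧ 0 < μ (A m j) ∧
        ∃ β > 0, ∀ x' ∈ A m i, ∀ y' ∈ A m j, β ≤ K x' y' ∧ β ≤ K y' x'
      refine ⟨hij, hi, hj, hμi, hμj, K x y / 2, half_pos hK, fun x' hx' y' hy' => ?_⟩
      have hdx : dist x' x < δ := by
        rw [← edist_lt_ofReal]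
        exact lt_of_le_of_lt (EMetric.edist_le_diam_of_mem hx' hxi)
          (hma m (le_trans (le_max_left _ _) hm) i hi hxi)
      have hdy : dist y' y < δ := by
        rw [← edist_lt_ofReal]
        exact lt_of_le_of_lt (EMetric.edist_le_diam_of_mem hy' hyj)
          (hmb m (le_trans (le_max_right _ _) hm) j hj hyj)
      have h1 := hball' x' y' hdx hdy
      exact ⟨le_of_lt h1, by rw [hKsymm y' x']; exact le_of_lt h1⟩
  exact mem_scSet_iff.mpr ⟨i, j, hxi, hyj, hi, hj, hμi, hμj, hcomp⟩

lemma ennreal_sub_flip {e t : ENNReal} (he0 : e ≠ 0) (ht : t ≠ ⊤) (h : 1 - e < t) :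
    1 - t < e := by
  rcases le_or_gt t 1 with h1 | h1
  · rw [ENNReal.sub_lt_iff_lt_right ht h1]
    rcases le_or_gt e 1 with h2 | h2
    · have he : e ≠ ⊤ := ne_top_of_le_ne_top ENNReal.one_ne_top h2
      have := (ENNReal.sub_lt_iff_lt_right he h2).mp h
      rwa [add_comm e t]
    · exact lt_of_lt_of_le h2 le_self_add
  · rw [tsub_eq_zero_of_le h1.le]
    exact pos_iff_ne_zero.mpr he0

end PGaux

/-- **A component of the partition graph covers almost everything** (Lemma 3.6).
If `K` is irreducible and continuous `(μ ⊗ μ)`-a.e., then for any `ε > 0` there are `m ≥ 1`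
and a connected component `C_m` of `H_m` with `μ(S \ ⋃_{i ∈ C_m} A m i) < ε`. -/
theorem partition_graph_giant_component
    {S : Type*} [MetricSpace S] [TopologicalSpace.SeparableSpace S]
    [MeasurableSpace S] [BorelSpace S]
    (μ : Measure S) [IsProbabilityMeasure μ] (K : S → S → ℝ)
    (hKsymm : ∀ x y, K x y = K y x)
    (hKnonneg : ∀ x y, 0 ≤ K x y)
    (hKmeas : Measurable (Function.uncurry K))
    (hKint : Integrable (Function.uncurry K) (μ.prod μ))
    (hirr : IrreducibleKernel K μ)
    (hcont : ∀ᵐ p ∂(μ.prod μ), ContinuousAt (Function.uncurry K) p)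
    -- the partition sequence, as in Lemma 3.4
    (M : ℕ → ℕ) (A : ℕ → ℕ → Set S)
    (hM : ∀ m, 1 ≤ M m)
    (hcover : ∀ m, (⋃ i ∈ Finset.range (M m), A m i) = Set.univ)
    (hdisj : ∀ m, ∀ i < M m, ∀ j < M m, i ≠ j → Disjoint (A m i) (A m j))
    (hmeas : ∀ m, ∀ i < M m, MeasurableSet (A m i))
    (hbd : ∀ m, ∀ i < M m, μ (frontier (A m i)) = 0)
    (href : ∀ m, ∀ i < M m,
      A m i = ⋃ j ∈ {j | j < M (m+1) ∧ A (m+1) j ⊆ A m i}, A (m+1) j)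
    (hdiam : ∀ᵐ x ∂μ, ∀ ε : ENNReal, 0 < ε → ∃ m₀ : ℕ, ∀ m ≥ m₀, ∀ i < M m,
      x ∈ A m i → EMetric.diam (A m i) < ε)
    (ε : ℝ) (hε : 0 < ε) :
    ∃ (m : ℕ) (c : (partitionGraph K μ M A m).ConnectedComponent),
      1 ≤ m ∧
      (∀ i ∈ c.supp, i < M m ∧ 0 < μ (A m i)) ∧
      μ (Set.univ \ ⋃ i ∈ c.supp, A m i) < ENNReal.ofReal ε := by
  classical
  -- a.e. every point lies only in positive-measure cells
  have hpos : ∀ᵐ x ∂μ, ∀ m, ∀ i, i < M m → x ∈ A m i → 0 < μ (A m i) := by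
    rw [MeasureTheory.ae_all_iff]
    intro m
    rw [ae_iff]
    refine measure_mono_null (fun x hx => ?_)
      (?_ : μ (⋃ i, ⋃ (_ : i < M m ∧ μ (A m i) = 0), A m i) = 0)
    · simp only [Set.mem_setOf_eq] at hx
      push_neg at hx
      obtain ⟨i, hi, hxi, hnpos⟩ := hx
      have h0 : μ (A m i) = 0 := by
        by_contra h
        exact absurd (pos_iff_ne_zero.mpr h) (not_lt.mpr hnpos)
      exact Set.mem_iUnion.mpr ⟨i, Set.mem_iUnion.mpr ⟨⟨hi, h0⟩, hxi⟩⟩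
    · rw [measure_iUnion_null_iff]
      intro i
      by_cases h : i < M m ∧ μ (A m i) = 0
      · simpa [h] using h.2
      · simp [h]
  -- the a.e. statement: positive kernel values force eventual common components
  have haeRel : ∀ᵐ p ∂(μ.prod μ), 0 < K p.1 p.2 → p ∈ PGaux.relSet K μ M A := by
    filter_upwards [hcont, PGaux.ae_prod_fst (hpos.and hdiam),
      PGaux.ae_prod_snd (hpos.and hdiam)] with p hcp hg1 hg2 hKp
    obtain ⟨m₁, hm₁⟩ := PGaux.eventually_mem_scSet hKsymm hcover hg1.1 hg2.1 hg1.2 hg2.2 hcp hKp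
    exact Set.mem_iUnion.mpr ⟨m₁,
      Set.mem_iInter.mpr fun m => Set.mem_iInter.mpr fun hm => hm₁ m hm⟩
  by_cases hdeg : ∃ B : Set S, MeasurableSet B ∧ 0 < μ B ∧ μ B < 1
  · -- main case
    obtain ⟨B, hBm, hB0, hB1⟩ := hdeg
    have hRelMeas : MeasurableSet (PGaux.relSet K μ M A) := PGaux.measurableSet_relSet hmeas
    by_cases hsec : ∀ᵐ x ∂μ, μ (Prod.mk x ⁻¹' PGaux.relSet K μ M A) = 0
    · exfalso
      have h0 : μ.prod μ (PGaux.relSet K μ M A) = 0 := by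
        rw [Measure.prod_apply hRelMeas, lintegral_congr_ae (hsec.mono fun x hx => hx),
          lintegral_zero]
      have hnot : ∀ᵐ p ∂(μ.prod μ), p ∉ PGaux.relSet K μ M A :=
        measure_eq_zero_iff_ae_notMem.mp h0
      have hK0 : ∀ᵐ p ∂(μ.prod μ), K p.1 p.2 = 0 := by
        filter_upwards [haeRel, hnot] with p h1 h2
        by_contra h
        exact h2 (h1 (lt_of_le_of_ne (hKnonneg _ _) (Ne.symm h)))
      exact hirr ⟨B, hBm, hB0, hB1, hK0.mono fun p hp _ _ => hp⟩
    · -- pick a good reference point with non-null relation section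
      have hTne : ∃ x₀ : S, (∀ m, ∀ i, i < M m → x₀ ∈ A m i → 0 < μ (A m i)) ∧
          μ (Prod.mk x₀ ⁻¹' PGaux.relSet K μ M A) ≠ 0 := by
        by_contra hcon
        push_neg at hcon
        exact hsec ((hpos.mono fun x hx => hcon x hx))
      obtain ⟨x₀, hx₀good, hx₀pos⟩ := hTne
      set E : Set S := Prod.mk x₀ ⁻¹' PGaux.relSet K μ M A with hEdef
      have hEmeas : MeasurableSet E := hRelMeas.preimage measurable_prodMk_left
      have hE1 : μ E = 1 := by
        by_contra hne
        have hlt : μ E < 1 := lt_of_le_of_ne prob_le_one hne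
        refine hirr ⟨E, hEmeas, pos_iff_ne_zero.mpr hx₀pos, hlt, ?_⟩
        filter_upwards [haeRel] with p h1 hp1 hp2
        by_contra h
        have hKp : 0 < K p.1 p.2 := lt_of_le_of_ne (hKnonneg _ _) (Ne.symm h)
        exact hp2 (PGaux.relSet_trans hdisj hp1 (h1 hKp))
      set T : ℕ → Set S :=
        fun m₀ => ⋂ m, ⋂ (_ : m₀ ≤ m), Prod.mk x₀ ⁻¹' PGaux.scSet K μ M A m with hTdef
      have hET : E = ⋃ m₀, T m₀ := by
        simp only [hEdef, hTdef, PGaux.relSet, Set.preimage_iUnion, Set.preimage_iInter]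
      have hTmono : Monotone T := by
        intro a b hab y hy
        simp only [hTdef, Set.mem_iInter] at hy ⊢
        exact fun m hm => hy m (hab.trans hm)
      have hTmeas : ∀ m₀, MeasurableSet (T m₀) := fun m₀ =>
        MeasurableSet.iInter fun m => MeasurableSet.iInter fun _ =>
          (PGaux.measurableSet_scSet (hmeas m)).preimage measurable_prodMk_left
      have hsup : (⨆ m₀, μ (T m₀)) = 1 := by
        rw [← hTmono.directed_le.measure_iUnion, ← hET, hE1]
      have hlt1 : (1 : ENNReal) - ENNReal.ofReal ε < ⨆ m₀, μ (T m₀) := by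
        rw [hsup]
        exact ENNReal.sub_lt_self ENNReal.one_ne_top one_ne_zero
          (ne_of_gt (ENNReal.ofReal_pos.mpr hε))
      obtain ⟨m₀, hm₀⟩ := lt_iSup_iff.mp hlt1
      have hm1 : 1 ≤ max m₀ 1 := le_max_right _ _
      set m := max m₀ 1 with hmdef
      have hmT : 1 - ENNReal.ofReal ε < μ (T m) :=
        lt_of_lt_of_le hm₀ (measure_mono (hTmono (le_max_left _ _)))
      have hx₀cell : ∃ i, i < M m ∧ x₀ ∈ A m i := by
        have hx' : x₀ ∈ ⋃ i ∈ Finset.range (M m), A m i := by rw [hcover m]; trivial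
        simpa using hx'
      obtain ⟨i₀, hi₀, hx₀i⟩ := hx₀cell
      have hμi₀ : 0 < μ (A m i₀) := hx₀good m i₀ hi₀ hx₀i
      refine ⟨m, (partitionGraph K μ M A m).connectedComponentMk i₀, hm1, ?_, ?_⟩
      · intro j hj
        rw [SimpleGraph.ConnectedComponent.mem_supp_iff] at hj
        obtain ⟨w⟩ := SimpleGraph.ConnectedComponent.exact hj
        cases w with
        | nil => exact ⟨hi₀, hμi₀⟩
        | cons hadj _ =>
          obtain ⟨_, hjm, _, hμj, _⟩ := hadj
          exact ⟨hjm, hμj⟩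
      · have hsub : T m ⊆
            ⋃ i ∈ ((partitionGraph K μ M A m).connectedComponentMk i₀).supp, A m i := by
          intro y hy
          have hy' : (x₀, y) ∈ PGaux.scSet K μ M A m := by
            simp only [hTdef, Set.mem_iInter] at hy
            exact hy m le_rfl
          obtain ⟨i, j, h1, h2, hi, hj', hμi, hμj, hcomp⟩ := PGaux.mem_scSet_iff.mp hy'
          have hii₀ : i = i₀ := PGaux.cell_unique hdisj hi hi₀ h1 hx₀i
          subst hii₀
          exact Set.mem_biUnion
            ((SimpleGraph.ConnectedComponent.mem_supp_iff _ _).mpr hcomp.symm) h2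
        calc μ (Set.univ \
              ⋃ i ∈ ((partitionGraph K μ M A m).connectedComponentMk i₀).supp, A m i)
            ≤ μ (T m)ᶜ := measure_mono (fun z hz hzT => hz.2 (hsub hzT))
          _ = 1 - μ (T m) := by
              rw [measure_compl (hTmeas m) (measure_ne_top μ _), measure_univ]
          _ < ENNReal.ofReal ε :=
              PGaux.ennreal_sub_flip (ne_of_gt (ENNReal.ofReal_pos.mpr hε))
                (measure_ne_top μ _) hmT
  · -- degenerate case: the measure is 0-1 valued
    push_neg at hdeg
    have hone : ∀ B : Set S, MeasurableSet B → 0 < μ B → μ B = 1 := fun B hBm hB0 =>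
      le_antisymm prob_le_one (hdeg B hBm hB0)
    have hex : ∃ i, i ∈ Finset.range (M 1) ∧ μ (A 1 i) ≠ 0 := by
      by_contra hcon
      push_neg at hcon
      have h0 : μ (⋃ i ∈ Finset.range (M 1), A 1 i) = 0 :=
        measure_iUnion_null fun i => measure_iUnion_null fun hi => hcon i hi
      rw [hcover 1, measure_univ] at h0
      exact one_ne_zero h0
    obtain ⟨i₀, hi₀r, hμne⟩ := hex
    have hi₀ : i₀ < M 1 := Finset.mem_range.mp hi₀r
    have hμi₀pos : 0 < μ (A 1 i₀) := pos_iff_ne_zero.mpr hμne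
    have hμi₀ : μ (A 1 i₀) = 1 := hone _ (hmeas 1 i₀ hi₀) hμi₀pos
    have hnoadj : ∀ j k, ¬ (partitionGraph K μ M A 1).Adj j k := by
      intro j k hadj
      obtain ⟨hne, hjm, hkm, hμj, hμk, -⟩ := hadj
      have h1 : μ (A 1 j) = 1 := hone _ (hmeas 1 j hjm) hμj
      have h2 : μ (A 1 k) = 1 := hone _ (hmeas 1 k hkm) hμk
      have hd := hdisj 1 j hjm k hkm hne
      have hle : μ (A 1 j ∪ A 1 k) ≤ 1 := prob_le_one
      rw [measure_union hd (hmeas 1 k hkm), h1, h2] at hle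
      exact absurd (lt_of_lt_of_le (ENNReal.lt_add_right ENNReal.one_ne_top one_ne_zero) hle)
        (lt_irrefl 1)
    refine ⟨1, (partitionGraph K μ M A 1).connectedComponentMk i₀, le_refl 1, ?_, ?_⟩
    · intro j hj
      rw [SimpleGraph.ConnectedComponent.mem_supp_iff] at hj
      obtain ⟨w⟩ := SimpleGraph.ConnectedComponent.exact hj
      cases w with
      | nil => exact ⟨hi₀, hμi₀pos⟩
      | cons hadj _ => exact absurd hadj (hnoadj _ _)
    · have hsub : A 1 i₀ ⊆
          ⋃ i ∈ ((partitionGraph K μ M A 1).connectedComponentMk i₀).supp, A 1 i :=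
        Set.subset_biUnion_of_mem
          ((SimpleGraph.ConnectedComponent.mem_supp_iff _ _).mpr rfl)
      calc μ (Set.univ \
            ⋃ i ∈ ((partitionGraph K μ M A 1).connectedComponentMk i₀).supp, A 1 i)
          ≤ μ (A 1 i₀)ᶜ := measure_mono (fun z hz hzA => hz.2 (hsub hzA))
        _ = 1 - 1 := by
            rw [measure_compl (hmeas 1 i₀ hi₀) (measure_ne_top μ _), measure_univ, hμi₀]
        _ < ENNReal.ofReal ε := by
            rw [tsub_self]
            exact ENNReal.ofReal_pos.mpr hε
end
end

section
/- For the kernel K on [0,1] one has ∫₀¹ K(x,y)² dy = c²/x for every x ∈ (0, 1/2], and ∫₀¹ K(x,y)² dy = 3c²/(2x) − c² for every x ∈ (1/2, 1]. Consequently λ₂ ∉ L²([0,1], μ) and λ₂ ∉ L∞([0,1], μ). -/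
open MeasureTheory Filter Set

noncomputable section

/-- The example kernel of Section 4 on `S = [0,1]`:
`K(x,y) = (c/x) 1_{[x/2,x]}(y) + (c/y) 1_{[y/2,y]}(x)` for `x, y ∈ (0,1]`, and `K = 0` when
`x = 0` or `y = 0` (note that both clauses below indeed vanish in that case). -/
def Kex (c : ℝ) (x y : ℝ) : ℝ :=
  (if y ∈ Set.Icc (x/2) x then c / x else 0) + (if x ∈ Set.Icc (y/2) y then c / y else 0)

lemma intervalIntegral_congr_Ioo {f g : ℝ → ℝ} {a b : ℝ} (hab : a ≤ b)
    (h : ∀ y ∈ Set.Ioo a b, f y = g y) : ∫ y in a..b, f y = ∫ y in a..b, g y := by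
  apply intervalIntegral.integral_congr_ae
  have hb : ∀ᵐ y : ℝ, y ≠ b := by rw [ae_iff]; simpa using Real.volume_singleton (a := b)
  filter_upwards [hb] with y hy hmem
  rw [Set.uIoc_of_le hab] at hmem
  exact h y ⟨hmem.1, lt_of_le_of_ne hmem.2 hy⟩

lemma intervalIntegrable_congr_Ioo {f g : ℝ → ℝ} {a b : ℝ} (hab : a ≤ b)
    (h : ∀ y ∈ Set.Ioo a b, f y = g y) (hg : IntervalIntegrable g volume a b) :
    IntervalIntegrable f volume a b := by
  refine hg.congr_ae ?_
  rw [Set.uIoc_of_le hab, Filter.eventuallyEq_iff_exists_mem]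
  refine ⟨{y | y ≠ b} ∩ Set.Ioc a b, ?_, fun y hy => (h y ⟨hy.2.1, lt_of_le_of_ne hy.2.2 hy.1⟩).symm⟩
  exact Filter.inter_mem
    (ae_restrict_of_ae (by rw [ae_iff]; simpa using Real.volume_singleton (a := b)))
    (ae_restrict_mem measurableSet_Ioc)

lemma integral_zpow_neg_two {a b : ℝ} (ha : 0 < a) (hab : a ≤ b) :
    ∫ y in a..b, (y : ℝ) ^ (-2 : ℤ) = 1/a - 1/b := by
  have ha' : a ≠ 0 := ne_of_gt ha
  have hb' : b ≠ 0 := ne_of_gt (lt_of_lt_of_le ha hab)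
  rw [integral_zpow]
  · norm_num [zpow_neg]
    field_simp
    ring
  · right
    refine ⟨by norm_num, ?_⟩
    rw [Set.uIcc_of_le hab]; intro h; exact absurd h.1 (by linarith)

lemma ii_zpow_neg_two (c a b : ℝ) (ha : 0 < a) (hab : a ≤ b) :
    IntervalIntegrable (fun y : ℝ => c^2 * y ^ (-2 : ℤ)) volume a b := by
  apply ContinuousOn.intervalIntegrable
  refine continuousOn_const.mul (continuousOn_id.zpow₀ _ fun y hy => Or.inl ?_)
  rw [Set.uIcc_of_le hab] at hy
  exact ne_of_gt (lt_of_lt_of_le ha hy.1)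

lemma div_sq_eq_zpow (c y : ℝ) : c^2 / y^2 = c^2 * y ^ (-2 : ℤ) := by
  rw [zpow_neg, zpow_two, pow_two, div_eq_mul_inv]
  ring

-- pointwise formulas
lemma Kex_lo {c x y : ℝ} (hx : 0 < x) (hy : y ∈ Set.Ioo 0 (x/2)) : Kex c x y = 0 := by
  obtain ⟨hy0, hy1⟩ := hy
  rw [Kex, if_neg, if_neg]
  · ring
  · rintro ⟨h1, h2⟩; nlinarith
  · rintro ⟨h1, h2⟩; nlinarith

lemma Kex_mid {c x y : ℝ} (hx : 0 < x) (hy : y ∈ Set.Ioo (x/2) x) : Kex c x y = c / x := by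
  obtain ⟨hy0, hy1⟩ := hy
  rw [Kex, if_pos ⟨le_of_lt hy0, le_of_lt hy1⟩, if_neg]
  · ring
  · rintro ⟨h1, h2⟩; nlinarith

lemma Kex_hi {c x y : ℝ} (hx : 0 < x) (hy : y ∈ Set.Ioo x (2*x)) : Kex c x y = c / y := by
  obtain ⟨hy0, hy1⟩ := hy
  rw [Kex, if_neg, if_pos ⟨by linarith, le_of_lt hy0⟩]
  · ring
  · rintro ⟨h1, h2⟩; nlinarith

lemma Kex_top {c x y : ℝ} (hx : 0 < x) (hy : 2*x < y) : Kex c x y = 0 := by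
  rw [Kex, if_neg, if_neg]
  · ring
  · rintro ⟨h1, h2⟩; nlinarith
  · rintro ⟨h1, h2⟩; nlinarith

lemma key1 {c x : ℝ} (hx : 0 < x) (hx2 : x ≤ 1/2) :
    (∫ y in (0:ℝ)..1, (Kex c x y) ^ 2) = c^2 / x := by
  have hx1 : x ≤ 1 := by linarith
  have h2x : 2*x ≤ 1 := by linarith
  have i1 : IntervalIntegrable (fun y => Kex c x y ^ 2) volume 0 (x/2) :=
    intervalIntegrable_congr_Ioo (by linarith) (fun y hy => by rw [Kex_lo hx hy])
      intervalIntegrable_const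
  have i2 : IntervalIntegrable (fun y => Kex c x y ^ 2) volume (x/2) x :=
    intervalIntegrable_congr_Ioo (by linarith) (fun y hy => by rw [Kex_mid hx hy])
      intervalIntegrable_const
  have i3 : IntervalIntegrable (fun y => Kex c x y ^ 2) volume x (2*x) :=
    intervalIntegrable_congr_Ioo (by linarith)
      (fun y hy => by rw [Kex_hi hx hy, div_pow, div_sq_eq_zpow])
      (ii_zpow_neg_two c x (2*x) hx (by linarith))
  have i4 : IntervalIntegrable (fun y => Kex c x y ^ 2) volume (2*x) 1 :=
    intervalIntegrable_congr_Ioo h2x (fun y hy => by rw [Kex_top hx hy.1])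
      intervalIntegrable_const
  rw [← intervalIntegral.integral_add_adjacent_intervals i1 (i2.trans (i3.trans i4)),
      ← intervalIntegral.integral_add_adjacent_intervals i2 (i3.trans i4),
      ← intervalIntegral.integral_add_adjacent_intervals i3 i4]
  have e1 : (∫ y in (0:ℝ)..(x/2), Kex c x y ^ 2) = 0 := by
    rw [intervalIntegral_congr_Ioo (by linarith) (fun y hy => by rw [Kex_lo hx hy])]
    simp
  have e2 : (∫ y in (x/2)..x, Kex c x y ^ 2) = (x - x/2) * (c/x)^2 := by
    rw [intervalIntegral_congr_Ioo (by linarith) (fun y hy => by rw [Kex_mid hx hy]),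
        intervalIntegral.integral_const, smul_eq_mul]
  have e3 : (∫ y in x..(2*x), Kex c x y ^ 2) = c^2 * (1/x - 1/(2*x)) := by
    rw [intervalIntegral_congr_Ioo (g := fun y => c^2 * y ^ (-2:ℤ)) (by linarith)
      (fun y hy => by rw [Kex_hi hx hy, div_pow, div_sq_eq_zpow]),
      intervalIntegral.integral_const_mul, integral_zpow_neg_two hx (by linarith)]
  have e4 : (∫ y in (2*x)..1, Kex c x y ^ 2) = 0 := by
    rw [intervalIntegral_congr_Ioo h2x (fun y hy => by rw [Kex_top hx hy.1])]
    simp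
  rw [e1, e2, e3, e4]
  field_simp
  ring

lemma key2 {c x : ℝ} (hx : 1/2 < x) (hx1 : x ≤ 1) :
    (∫ y in (0:ℝ)..1, (Kex c x y) ^ 2) = 3 * c^2 / (2*x) - c^2 := by
  have hx0 : 0 < x := by linarith
  have i1 : IntervalIntegrable (fun y => Kex c x y ^ 2) volume 0 (x/2) :=
    intervalIntegrable_congr_Ioo (by linarith) (fun y hy => by rw [Kex_lo hx0 hy])
      intervalIntegrable_const
  have i2 : IntervalIntegrable (fun y => Kex c x y ^ 2) volume (x/2) x :=
    intervalIntegrable_congr_Ioo (by linarith) (fun y hy => by rw [Kex_mid hx0 hy])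
      intervalIntegrable_const
  have i3 : IntervalIntegrable (fun y => Kex c x y ^ 2) volume x 1 :=
    intervalIntegrable_congr_Ioo hx1
      (fun y hy => by rw [Kex_hi hx0 ⟨hy.1, by linarith [hy.2]⟩, div_pow, div_sq_eq_zpow])
      (ii_zpow_neg_two c x 1 hx0 hx1)
  rw [← intervalIntegral.integral_add_adjacent_intervals i1 (i2.trans i3),
      ← intervalIntegral.integral_add_adjacent_intervals i2 i3]
  have e1 : (∫ y in (0:ℝ)..(x/2), Kex c x y ^ 2) = 0 := by
    rw [intervalIntegral_congr_Ioo (by linarith) (fun y hy => by rw [Kex_lo hx0 hy])]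
    simp
  have e2 : (∫ y in (x/2)..x, Kex c x y ^ 2) = (x - x/2) * (c/x)^2 := by
    rw [intervalIntegral_congr_Ioo (by linarith) (fun y hy => by rw [Kex_mid hx0 hy]),
        intervalIntegral.integral_const, smul_eq_mul]
  have e3 : (∫ y in x..1, Kex c x y ^ 2) = c^2 * (1/x - 1/1) := by
    rw [intervalIntegral_congr_Ioo (g := fun y => c^2 * y ^ (-2:ℤ)) hx1
      (fun y hy => by rw [Kex_hi hx0 ⟨hy.1, by linarith [hy.2]⟩, div_pow, div_sq_eq_zpow]),
      intervalIntegral.integral_const_mul, integral_zpow_neg_two hx0 hx1]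
  rw [e1, e2, e3]
  field_simp
  ring

/-- **The square degree function of the example kernel** (Section 4):
`∫₀¹ K(x,y)² dy = c²/x` on `(0,1/2]` and `= 3c²/(2x) - c²` on `(1/2,1]`; consequently
`λ₂ = (∫₀¹ K(·,y)² dy)^{1/2}` is neither in `L²` nor in `L∞` of Lebesgue measure on `[0,1]`. -/
theorem example_kernel_lambda2 (c : ℝ) (hc : 0 < c) :
    (∀ x ∈ Set.Ioc (0:ℝ) (1/2), (∫ y in (0:ℝ)..1, (Kex c x y) ^ 2) = c^2 / x) ∧
    (∀ x ∈ Set.Ioc (1/2 : ℝ) 1,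
      (∫ y in (0:ℝ)..1, (Kex c x y) ^ 2) = 3 * c^2 / (2*x) - c^2) ∧
    ¬ MemLp (fun x => Real.sqrt (∫ y in (0:ℝ)..1, (Kex c x y) ^ 2)) 2
        (volume.restrict (Set.Icc (0:ℝ) 1)) ∧
    ¬ MemLp (fun x => Real.sqrt (∫ y in (0:ℝ)..1, (Kex c x y) ^ 2)) ⊤
        (volume.restrict (Set.Icc (0:ℝ) 1)) := by

  have part1 : ∀ x ∈ Set.Ioc (0:ℝ) (1/2), (∫ y in (0:ℝ)..1, (Kex c x y) ^ 2) = c^2 / x :=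
    fun x hx => key1 hx.1 hx.2
  have part2 : ∀ x ∈ Set.Ioc (1/2:ℝ) 1,
      (∫ y in (0:ℝ)..1, (Kex c x y) ^ 2) = 3 * c^2 / (2*x) - c^2 :=
    fun x hx => key2 hx.1 hx.2
  have Inonneg : ∀ x : ℝ, 0 ≤ ∫ y in (0:ℝ)..1, (Kex c x y) ^ 2 := fun x =>
    intervalIntegral.integral_nonneg (by norm_num) (fun y _ => sq_nonneg _)
  have notL2 : ¬ MemLp (fun x => Real.sqrt (∫ y in (0:ℝ)..1, (Kex c x y) ^ 2)) 2
      (volume.restrict (Set.Icc (0:ℝ) 1)) := by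
    intro h
    have hsq := (memLp_two_iff_integrable_sq h.aestronglyMeasurable).mp h
    have hIcc : IntegrableOn
        (fun x => Real.sqrt (∫ y in (0:ℝ)..1, (Kex c x y) ^ 2) ^ 2) (Set.Icc (0:ℝ) 1) volume :=
      hsq
    have hIoc : IntegrableOn
        (fun x => Real.sqrt (∫ y in (0:ℝ)..1, (Kex c x y) ^ 2) ^ 2)
        (Set.Ioc (0:ℝ) (1/2)) volume :=
      hIcc.mono_set (fun x hx => ⟨le_of_lt hx.1, by linarith [hx.2]⟩)
    have hinv : IntegrableOn (fun x : ℝ => c^2 * x⁻¹) (Set.Ioc (0:ℝ) (1/2)) volume := by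
      refine hIoc.congr_fun (fun x hx => ?_) measurableSet_Ioc
      dsimp only; rw [Real.sq_sqrt (Inonneg x), part1 x hx, div_eq_mul_inv]
    have hinv' : IntegrableOn (fun x : ℝ => x⁻¹) (Set.Ioc (0:ℝ) (1/2)) volume := by
      have h2 := hinv.const_mul ((c^2)⁻¹)
      have hcc : c^2 ≠ 0 := by positivity
      have heq : (fun x : ℝ => (c^2)⁻¹ * (c^2 * x⁻¹)) = fun x : ℝ => x⁻¹ := by
        funext x; field_simp
      rwa [heq] at h2
    have : IntervalIntegrable (fun x : ℝ => x⁻¹) volume 0 (1/2) := by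
      rw [intervalIntegrable_iff_integrableOn_Ioc_of_le (by norm_num)]
      exact hinv'
    rw [intervalIntegrable_inv_iff] at this
    rcases this with h1 | h1
    · norm_num at h1
    · exact h1 (by rw [Set.uIcc_of_le (by norm_num)]; exact ⟨le_refl _, by norm_num⟩)
  refine ⟨part1, part2, notL2, ?_⟩
  intro h
  haveI : IsFiniteMeasure (volume.restrict (Set.Icc (0:ℝ) 1)) :=
    ⟨by rw [Measure.restrict_apply_univ]; simp [Real.volume_Icc]⟩
  exact notL2 (MemLp.mono_exponent h le_top)
end
end
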